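/- arXiv:1705.07032 — 4 statements merged into one kernel-verified Lean document; each statement's English description precedes it below -/
import Mathlib

section
/- Let [·|·] be a semi-inner product on X. The following conditions are equivalent: (i) for all x,y ∈ X, ρ*(x,y) = 0 if and only if [y|x] = 0; (ii) for all x,y ∈ X, ρ*(x,y) = 0 implies [y|x] = 0; (iii) ρ*(x,y) = [y|x]² for all x,y ∈ X. -/
open Filter Topology

/-- The norm derivative `ρ₊(x,y) = lim_{t→0⁺} (‖x+ty‖² − ‖x‖²)/(2t)`. -/
noncomputable def rhoPlus {X : Type*} [NormedAddCommGroup X] [NormedSpace ℝ X] (x y : X) : ℝ :=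
  limUnder (𝓝[>] (0 : ℝ)) (fun t : ℝ => (‖x + t • y‖ ^ 2 - ‖x‖ ^ 2) / (2 * t))

/-- The norm derivative `ρ₋(x,y) = lim_{t→0⁻} (‖x+ty‖² − ‖x‖²)/(2t)`. -/
noncomputable def rhoMinus {X : Type*} [NormedAddCommGroup X] [NormedSpace ℝ X] (x y : X) : ℝ :=
  limUnder (𝓝[<] (0 : ℝ)) (fun t : ℝ => (‖x + t • y‖ ^ 2 - ‖x‖ ^ 2) / (2 * t))

/-- `ρ*(x,y) := ρ₋(x,y)·ρ₊(x,y)`. -/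
noncomputable def rhoStar {X : Type*} [NormedAddCommGroup X] [NormedSpace ℝ X] (x y : X) : ℝ :=
  rhoMinus x y * rhoPlus x y
/-- A semi-inner product on a real normed space `X`. -/
structure SemiInnerProduct (X : Type*) [NormedAddCommGroup X] [NormedSpace ℝ X] where
  toFun : X → X → ℝ
  linear_left : ∀ (r t : ℝ) (x y z : X),
    toFun (r • x + t • y) z = r * toFun x z + t * toFun y z
  norm_sq : ∀ x : X, toFun x x = ‖x‖ ^ 2
  abs_le : ∀ x y : X, |toFun x y| ≤ ‖x‖ * ‖y‖

section Aux
open Set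

variable {X : Type*} [NormedAddCommGroup X] [NormedSpace ℝ X]

private lemma normsq_convex (x y : X) : ConvexOn ℝ Set.univ (fun t : ℝ => ‖x + t • y‖ ^ 2) := by
  have h : ConvexOn ℝ Set.univ (fun t : ℝ => ‖x + t • y‖) := by
    have : ConvexOn ℝ ((AffineMap.lineMap x (x + y) : ℝ →ᵃ[ℝ] X) ⁻¹' univ) (norm ∘ (AffineMap.lineMap x (x + y) : ℝ →ᵃ[ℝ] X)) := convexOn_univ_norm.comp_affineMap (AffineMap.lineMap x (x + y) : ℝ →ᵃ[ℝ] X)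
    convert this using 2 with t
    · simp
    simp [Function.comp_def, AffineMap.lineMap_apply_module']
    rw [add_comm]
  have := h.pow (fun t _ => norm_nonneg _) 2
  exact this

private lemma rhoPlus_tendsto_aux (x y : X) :
    ∃ L : ℝ, Tendsto (fun t : ℝ => (‖x + t • y‖ ^ 2 - ‖x‖ ^ 2) / (2 * t)) (𝓝[>] 0) (𝓝 L) := by
  set g : ℝ → ℝ := fun t => ‖x + t • y‖ ^ 2 with hg
  set q : ℝ → ℝ := fun t => (g t - g 0) / t with hq
  have hmono : MonotoneOn q (Ioi (0:ℝ)) := by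
    intro a ha b hb hab
    have := (normsq_convex x y).secant_mono (Set.mem_univ 0) (Set.mem_univ a)
      (Set.mem_univ b) (ne_of_gt ha) (ne_of_gt hb) hab
    simpa only [hq, hg, sub_zero, zero_smul, add_zero] using this
  have hbdd : BddBelow (q '' Ioi (0:ℝ)) := by
    refine ⟨q (-1), ?_⟩
    rintro _ ⟨t, ht, rfl⟩
    have := (normsq_convex x y).secant_mono (Set.mem_univ 0) (Set.mem_univ (-1))
      (Set.mem_univ t) (by norm_num) (ne_of_gt ht) (by linarith [Set.mem_Ioi.mp ht])
    simpa only [hq, hg, sub_zero, zero_smul, add_zero] using this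
  refine ⟨sInf (q '' Ioi 0) / 2, ?_⟩
  have h2 : Tendsto (fun t => q t / 2) (𝓝[>] (0:ℝ)) (𝓝 (sInf (q '' Ioi 0) / 2)) :=
    (hmono.tendsto_nhdsGT hbdd).div_const 2
  refine h2.congr' ?_
  filter_upwards [self_mem_nhdsWithin] with t ht
  have ht' : (t:ℝ) ≠ 0 := ne_of_gt ht
  simp only [hq, hg]
  rw [div_div]
  congr 1
  · simp
  · ring

private lemma rhoPlus_tendsto (x y : X) :
    Tendsto (fun t : ℝ => (‖x + t • y‖ ^ 2 - ‖x‖ ^ 2) / (2 * t)) (𝓝[>] 0)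
      (𝓝 (rhoPlus x y)) := by
  obtain ⟨L, hL⟩ := rhoPlus_tendsto_aux x y
  rwa [rhoPlus, hL.limUnder_eq]

private lemma map_neg_nhdsGT : Filter.map Neg.neg (𝓝[>] (0:ℝ)) = 𝓝[<] (0:ℝ) := by
  have := (Homeomorph.neg ℝ).isEmbedding.map_nhdsWithin_eq (Ioi 0) 0
  simpa using this

private lemma rhoMinus_tendsto_aux (x y : X) :
    Tendsto (fun t : ℝ => (‖x + t • y‖ ^ 2 - ‖x‖ ^ 2) / (2 * t)) (𝓝[<] 0)
      (𝓝 (-rhoPlus x (-y))) := by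
  rw [← map_neg_nhdsGT, tendsto_map'_iff]
  have h := (rhoPlus_tendsto x (-y)).neg
  refine h.congr fun s => ?_
  simp only [Function.comp_def, smul_neg, neg_smul, mul_neg, div_neg, neg_neg]

private lemma rhoMinus_eq (x y : X) : rhoMinus x y = -rhoPlus x (-y) :=
  (rhoMinus_tendsto_aux x y).limUnder_eq

private lemma rhoPlus_shift (x y : X) (s : ℝ) :
    rhoPlus x (y + s • x) = rhoPlus x y + s * ‖x‖ ^ 2 := by
  set u : ℝ → ℝ := fun t => t / (1 + t * s) with hu
  have hden : Tendsto (fun t : ℝ => 1 + t * s) (𝓝 0) (𝓝 1) := by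
    have : Continuous fun t : ℝ => 1 + t * s := by continuity
    simpa using this.tendsto 0
  have hden' : ∀ᶠ t in 𝓝 (0:ℝ), 0 < 1 + t * s :=
    hden.eventually (eventually_gt_nhds one_pos)
  have hu0 : Tendsto u (𝓝 0) (𝓝 0) := by
    have h1 : Tendsto (fun t : ℝ => t * (1 + t * s)⁻¹) (𝓝 0) (𝓝 (0 * 1⁻¹)) :=
      (continuous_id.tendsto 0).mul (hden.inv₀ one_ne_zero)
    simpa [hu, div_eq_mul_inv] using h1
  have huI : Tendsto u (𝓝[>] 0) (𝓝[>] 0) := by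
    rw [tendsto_nhdsWithin_iff]
    refine ⟨hu0.mono_left nhdsWithin_le_nhds, ?_⟩
    filter_upwards [self_mem_nhdsWithin, nhdsWithin_le_nhds hden'] with t ht hpos
    exact div_pos ht hpos
  have hG : Tendsto (fun t : ℝ =>
      (1 + t * s) * ((‖x + u t • y‖ ^ 2 - ‖x‖ ^ 2) / (2 * u t)) + (s + t * s ^ 2 / 2) * ‖x‖ ^ 2)
      (𝓝[>] 0) (𝓝 (1 * rhoPlus x y + s * ‖x‖ ^ 2)) := by
    refine Tendsto.add (Tendsto.mul ?_ ((rhoPlus_tendsto x y).comp huI)) ?_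
    · exact (hden.mono_left nhdsWithin_le_nhds)
    · have : Tendsto (fun t : ℝ => (s + t * s ^ 2 / 2) * ‖x‖ ^ 2) (𝓝 0)
          (𝓝 ((s + 0 * s ^ 2 / 2) * ‖x‖ ^ 2)) := by
        apply Continuous.tendsto; continuity
      simpa using this.mono_left nhdsWithin_le_nhds
  have hF : Tendsto (fun t : ℝ => (‖x + t • (y + s • x)‖ ^ 2 - ‖x‖ ^ 2) / (2 * t))
      (𝓝[>] 0) (𝓝 (1 * rhoPlus x y + s * ‖x‖ ^ 2)) := by
    refine hG.congr' ?_
    filter_upwards [self_mem_nhdsWithin, nhdsWithin_le_nhds hden'] with t ht hpos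
    have htne : (t:ℝ) ≠ 0 := ne_of_gt ht
    have hdne : (1 + t * s) ≠ 0 := ne_of_gt hpos
    have hvec : x + t • (y + s • x) = (1 + t * s) • (x + u t • y) := by
      simp only [hu]
      match_scalars <;> field_simp
    have hnorm : ‖x + t • (y + s • x)‖ ^ 2 = (1 + t * s) ^ 2 * ‖x + u t • y‖ ^ 2 := by
      rw [hvec, norm_smul, mul_pow, Real.norm_eq_abs, sq_abs]
    rw [hnorm]
    simp only [hu]
    have hune : t / (1 + t * s) ≠ 0 := div_ne_zero htne hdne
    field_simp
    ring
  rw [rhoPlus, hF.limUnder_eq]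
  ring

private lemma rhoMinus_shift (x y : X) (s : ℝ) :
    rhoMinus x (y + s • x) = rhoMinus x y + s * ‖x‖ ^ 2 := by
  have hneg : -(y + s • x) = -y + (-s) • x := by
    simp [neg_smul]; abel
  rw [rhoMinus_eq, hneg, rhoPlus_shift, rhoMinus_eq]
  ring

private lemma rhoPlus_zero (y : X) : rhoPlus (0 : X) y = 0 := by
  have h : Tendsto (fun t : ℝ => t * ‖y‖ ^ 2 / 2) (𝓝 0) (𝓝 (0 * ‖y‖ ^ 2 / 2)) := by
    apply Continuous.tendsto; continuity
  have h' : Tendsto (fun t : ℝ => (‖(0 : X) + t • y‖ ^ 2 - ‖(0 : X)‖ ^ 2) / (2 * t))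
      (𝓝[>] 0) (𝓝 0) := by
    have h2 := h.mono_left (nhdsWithin_le_nhds (s := Ioi (0:ℝ)))
    rw [show (0:ℝ) * ‖y‖ ^ 2 / 2 = 0 by ring] at h2
    refine h2.congr' ?_
    filter_upwards [self_mem_nhdsWithin] with t ht
    have htne : (t:ℝ) ≠ 0 := ne_of_gt ht
    rw [zero_add, norm_zero, norm_smul, mul_pow, Real.norm_eq_abs, sq_abs]
    field_simp
    ring
  rw [rhoPlus, h'.limUnder_eq]

private lemma rhoMinus_zero (y : X) : rhoMinus (0 : X) y = 0 := by
  rw [rhoMinus_eq, rhoPlus_zero, neg_zero]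

end Aux

theorem rhoStar_eq_sip_tfae {X : Type*} [NormedAddCommGroup X] [NormedSpace ℝ X]
    (hdim : 2 ≤ Module.rank ℝ X) (sip : SemiInnerProduct X) :
    List.TFAE
      [ ∀ x y : X, rhoStar x y = 0 ↔ sip.toFun y x = 0,
        ∀ x y : X, rhoStar x y = 0 → sip.toFun y x = 0,
        ∀ x y : X, rhoStar x y = (sip.toFun y x) ^ 2 ] := by
  tfae_have 1 → 2 := fun h x y hx => (h x y).mp hx
  tfae_have 2 → 3 := by
    intro h2 x y
    by_cases hx : x = 0
    · subst hx
      have h0 : sip.toFun y 0 = 0 := by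
        have := sip.abs_le y 0
        simp only [norm_zero, mul_zero] at this
        exact abs_nonpos_iff.mp this
      simp [rhoStar, rhoPlus_zero, rhoMinus_zero, h0]
    · have hx2 : (0:ℝ) < ‖x‖ ^ 2 := pow_pos (norm_pos_iff.mpr hx) 2
      have lin : ∀ s : ℝ, sip.toFun (y + s • x) x = sip.toFun y x + s * ‖x‖ ^ 2 := by
        intro s
        have := sip.linear_left 1 s y x x
        rw [one_smul] at this
        rw [this, one_mul, sip.norm_sq]
      have hb : sip.toFun y x = rhoPlus x y := by
        have h0 : rhoPlus x (y + (-(rhoPlus x y) / ‖x‖ ^ 2) • x) = 0 := by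
          rw [rhoPlus_shift]
          field_simp
          ring
        have hstar : rhoStar x (y + (-(rhoPlus x y) / ‖x‖ ^ 2) • x) = 0 := by
          rw [rhoStar, h0, mul_zero]
        have := h2 _ _ hstar
        rw [lin] at this
        field_simp at this
        rcases mul_eq_zero.mp (by linear_combination ‖x‖ ^ 2 * this :
            (sip.toFun y x - rhoPlus x y) * ‖x‖ ^ 2 = 0) with h | h
        · linarith
        · exact absurd h (ne_of_gt hx2)
      have ha : sip.toFun y x = rhoMinus x y := by
        have h0 : rhoMinus x (y + (-(rhoMinus x y) / ‖x‖ ^ 2) • x) = 0 := by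
          rw [rhoMinus_shift]
          field_simp
          ring
        have hstar : rhoStar x (y + (-(rhoMinus x y) / ‖x‖ ^ 2) • x) = 0 := by
          rw [rhoStar, h0, zero_mul]
        have := h2 _ _ hstar
        rw [lin] at this
        field_simp at this
        rcases mul_eq_zero.mp (by linear_combination ‖x‖ ^ 2 * this :
            (sip.toFun y x - rhoMinus x y) * ‖x‖ ^ 2 = 0) with h | h
        · linarith
        · exact absurd h (ne_of_gt hx2)
      rw [rhoStar, ← ha, ← hb]
      ring
  tfae_have 3 → 1 := by
    intro h3 x y
    rw [h3]
    exact sq_eq_zero_iff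
  tfae_finish
end

section
/- Let X and Y be real normed spaces with X of dimension at least 2, and let T : X → Y be a nonzero linear mapping. The following conditions are equivalent: (i) for all x,y ∈ X, x ⊥_{ρ*} y implies Tx ⊥_{ρ*} Ty; (ii) for all x,y ∈ X, x ⊥_{ρ*} y implies Tx ⊥_B Ty; (iii) ‖Tx‖ = ‖T‖·‖x‖ for all x ∈ X; (iv) ρ*(Tx, Ty) = ‖T‖⁴·ρ*(x,y) for all x,y ∈ X. (Here ‖T‖ denotes the operator norm of T, which is finite under any of these conditions.) -/
open Filter Topology
open Set

/-- The operator norm of a linear map: the supremum of `‖T x‖` over the unit sphere. -/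
noncomputable def opNorm {X Y : Type*} [NormedAddCommGroup X] [NormedSpace ℝ X]
    [NormedAddCommGroup Y] [NormedSpace ℝ Y] (T : X →ₗ[ℝ] Y) : ℝ :=
  sSup {c : ℝ | ∃ x : X, ‖x‖ = 1 ∧ c = ‖T x‖}

namespace RhoAux

variable {E : Type*} [NormedAddCommGroup E] [NormedSpace ℝ E]

/-- the slope function -/
noncomputable def sl (x y : E) (t : ℝ) : ℝ := (‖x + t • y‖ ^ 2 - ‖x‖ ^ 2) / (2 * t)

lemma convex_phi (x y : E) : ConvexOn ℝ Set.univ (fun t : ℝ => ‖x + t • y‖ ^ 2) := by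
  have h1 : ConvexOn ℝ Set.univ (fun t : ℝ => ‖x + t • y‖) := by
    have := (convexOn_norm (convex_univ (𝕜 := ℝ) (E := E))).comp_affineMap
      (AffineMap.lineMap x (x + y) : ℝ →ᵃ[ℝ] E)
    simpa [Function.comp_def, AffineMap.lineMap_apply, add_comm] using this
  have := h1.pow (fun t _ => norm_nonneg _) 2
  exact this

lemma sl_mono (x y : E) {s t : ℝ} (hs : s ≠ 0) (ht : t ≠ 0) (hst : s ≤ t) :
    sl x y s ≤ sl x y t := by
  have h := (convex_phi x y).secant_mono (a := 0) (x := s) (y := t)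
    (mem_univ _) (mem_univ _) (mem_univ _) hs ht hst
  simp only [zero_smul, add_zero, sub_zero] at h
  have e : ∀ u : ℝ, sl x y u = ((‖x + u • y‖ ^ 2 - ‖x‖ ^ 2) / u) / 2 := by
    intro u
    rw [sl, div_div]
    ring_nf
  rw [e s, e t]
  linarith

lemma bddBelow_sl (x y : E) : BddBelow (sl x y '' Ioi 0) := by
  refine ⟨sl x y (-1), ?_⟩
  rintro z ⟨t, ht, rfl⟩
  exact sl_mono x y (by norm_num) (ne_of_gt ht) (by linarith [mem_Ioi.1 ht])

lemma tendsto_sl_plus (x y : E) : Tendsto (sl x y) (𝓝[>] 0) (𝓝 (rhoPlus x y)) := by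
  have hmono : MonotoneOn (sl x y) (Ioi 0) := fun s hs t ht hst =>
    sl_mono x y (ne_of_gt hs) (ne_of_gt ht) hst
  have h := hmono.tendsto_nhdsGT (bddBelow_sl x y)
  have : rhoPlus x y = sInf (sl x y '' Ioi 0) := h.limUnder_eq
  rw [this]; exact h

lemma rhoPlus_le_sl (x y : E) {t : ℝ} (ht : 0 < t) : rhoPlus x y ≤ sl x y t := by
  refine le_of_tendsto (tendsto_sl_plus x y) ?_
  filter_upwards [Ioo_mem_nhdsGT ht] with s hs
  exact sl_mono x y (ne_of_gt hs.1) (ne_of_gt ht) hs.2.le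

lemma sl_le_rhoPlus (x y : E) {s : ℝ} (hs : s < 0) : sl x y s ≤ rhoPlus x y := by
  refine ge_of_tendsto (tendsto_sl_plus x y) ?_
  filter_upwards [self_mem_nhdsWithin] with t ht
  exact sl_mono x y (ne_of_lt hs) (ne_of_gt ht) (le_of_lt (hs.trans ht))

lemma sl_neg (x y : E) (t : ℝ) : sl x y t = - sl x (-y) (-t) := by
  simp only [sl, smul_neg, neg_smul, neg_neg, mul_neg]
  rw [div_neg]; ring_nf

lemma tendsto_neg_filter : Tendsto (Neg.neg : ℝ → ℝ) (𝓝[<] (0:ℝ)) (𝓝[>] (0:ℝ)) := by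
  rw [tendsto_nhdsWithin_iff]
  constructor
  · simpa using (continuous_neg.tendsto (0:ℝ)).mono_left nhdsWithin_le_nhds
  · filter_upwards [self_mem_nhdsWithin] with t (ht : t < 0)
    simpa using ht

lemma tendsto_sl_minus (x y : E) : Tendsto (sl x y) (𝓝[<] 0) (𝓝 (rhoMinus x y)) := by
  have h : Tendsto (sl x y) (𝓝[<] (0:ℝ)) (𝓝 (- rhoPlus x (-y))) := by
    have := ((tendsto_sl_plus x (-y)).comp tendsto_neg_filter).neg
    refine this.congr fun t => (sl_neg x y t).symm
  have : rhoMinus x y = - rhoPlus x (-y) := h.limUnder_eq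
  rw [this]; exact h

lemma rhoMinus_eq_neg (x y : E) : rhoMinus x y = - rhoPlus x (-y) := by
  have h : Tendsto (sl x y) (𝓝[<] (0:ℝ)) (𝓝 (- rhoPlus x (-y))) := by
    have := ((tendsto_sl_plus x (-y)).comp tendsto_neg_filter).neg
    refine this.congr fun t => (sl_neg x y t).symm
  exact h.limUnder_eq

lemma sl_le_rhoMinus (x y : E) {s : ℝ} (hs : s < 0) : sl x y s ≤ rhoMinus x y := by
  refine ge_of_tendsto (tendsto_sl_minus x y) ?_
  filter_upwards [Ioo_mem_nhdsLT hs] with t ht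
  exact sl_mono x y (ne_of_lt hs) (ne_of_lt ht.2) ht.1.le

lemma rhoMinus_le_sl (x y : E) {t : ℝ} (ht : 0 < t) : rhoMinus x y ≤ sl x y t := by
  refine le_of_tendsto (tendsto_sl_minus x y) ?_
  filter_upwards [self_mem_nhdsWithin] with s (hs : s < 0)
  exact sl_mono x y (ne_of_lt hs) (ne_of_gt ht) (hs.le.trans ht.le)

lemma rhoMinus_le_rhoPlus (x y : E) : rhoMinus x y ≤ rhoPlus x y := by
  refine ge_of_tendsto (tendsto_sl_plus x y) ?_
  filter_upwards [self_mem_nhdsWithin] with t ht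
  exact rhoMinus_le_sl x y ht

lemma rhoPlus_smul_add (x y : E) (α : ℝ) :
    rhoPlus x (α • x + y) = α * ‖x‖ ^ 2 + rhoPlus x y := by
  have hε : (0:ℝ) < (|α| + 1)⁻¹ := by positivity
  have hc : ∀ t : ℝ, t ∈ Ioo (0:ℝ) (|α| + 1)⁻¹ → 0 < 1 + t * α := by
    intro t ht
    have h1 : t * (|α| + 1) < 1 := by
      calc t * (|α| + 1) < (|α| + 1)⁻¹ * (|α| + 1) :=
            mul_lt_mul_of_pos_right ht.2 (by positivity)
        _ = 1 := by field_simp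
    nlinarith [neg_abs_le α, abs_nonneg α, ht.1]
  have hev : ∀ᶠ t in 𝓝[>] (0:ℝ),
      sl x (α • x + y) t
        = (1 + t * α) * sl x y (t / (1 + t * α)) + (α + t * α ^ 2 / 2) * ‖x‖ ^ 2 := by
    filter_upwards [Ioo_mem_nhdsGT hε] with t ht
    have hct := hc t ht
    have ht0 : (0:ℝ) < t := ht.1
    have hnorm : x + t • (α • x + y) = (1 + t * α) • (x + (t / (1 + t * α)) • y) := by
      have h2 : (1 + t * α) * (t / (1 + t * α)) = t := by field_simp
      rw [smul_add (1 + t * α), smul_smul, h2]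
      module
    rw [sl, sl, hnorm, norm_smul, Real.norm_eq_abs, abs_of_pos hct, mul_pow]
    have hs0 : t / (1 + t * α) ≠ 0 := by positivity
    field_simp
    ring
  have hs : Tendsto (fun t : ℝ => t / (1 + t * α)) (𝓝[>] 0) (𝓝[>] (0:ℝ)) := by
    rw [tendsto_nhdsWithin_iff]
    constructor
    · have hcont : ContinuousAt (fun t : ℝ => t / (1 + t * α)) 0 := by
        apply ContinuousAt.div continuousAt_id (by fun_prop) (by norm_num)
      have := hcont.tendsto.mono_left (nhdsWithin_le_nhds (s := Ioi (0:ℝ)))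
      simpa using this
    · filter_upwards [Ioo_mem_nhdsGT hε] with t ht
      exact mem_Ioi.2 (div_pos ht.1 (hc t ht))
  have h1 : Tendsto (fun t : ℝ => 1 + t * α) (𝓝[>] 0) (𝓝 1) := by
    have hcont : Continuous (fun t : ℝ => 1 + t * α) := by continuity
    have := (hcont.tendsto 0).mono_left (nhdsWithin_le_nhds (s := Ioi (0:ℝ)))
    simpa using this
  have h2 : Tendsto (fun t : ℝ => (α + t * α ^ 2 / 2) * ‖x‖ ^ 2) (𝓝[>] 0)
      (𝓝 (α * ‖x‖ ^ 2)) := by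
    have hcont : Continuous (fun t : ℝ => (α + t * α ^ 2 / 2) * ‖x‖ ^ 2) := by continuity
    have := (hcont.tendsto 0).mono_left (nhdsWithin_le_nhds (s := Ioi (0:ℝ)))
    simpa using this
  have hres : Tendsto (fun t : ℝ =>
      (1 + t * α) * sl x y (t / (1 + t * α)) + (α + t * α ^ 2 / 2) * ‖x‖ ^ 2)
      (𝓝[>] 0) (𝓝 (α * ‖x‖ ^ 2 + rhoPlus x y)) := by
    have := (h1.mul ((tendsto_sl_plus x y).comp hs)).add h2
    rw [one_mul] at this
    rw [add_comm (α * ‖x‖ ^ 2)]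
    exact this
  exact tendsto_nhds_unique (tendsto_sl_plus x (α • x + y)) (Tendsto.congr' (EventuallyEq.symm hev) hres)

lemma rhoMinus_smul_add (x y : E) (α : ℝ) :
    rhoMinus x (α • x + y) = α * ‖x‖ ^ 2 + rhoMinus x y := by
  have h : -(α • x + y) = (-α) • x + (-y) := by module
  rw [rhoMinus_eq_neg, h, rhoPlus_smul_add, rhoMinus_eq_neg]
  ring

lemma norm_le_of_rho {x y : E} (hm : rhoMinus x y ≤ 0) (hp : 0 ≤ rhoPlus x y) :
    ∀ lam : ℝ, ‖x‖ ≤ ‖x + lam • y‖ := by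
  intro lam
  rcases lt_trichotomy lam 0 with hlam | rfl | hlam
  · have h1 : sl x y lam ≤ 0 := (sl_le_rhoMinus x y hlam).trans hm
    rw [sl] at h1
    have h2 : 2 * lam < 0 := by linarith
    have h3 : 0 ≤ ‖x + lam • y‖ ^ 2 - ‖x‖ ^ 2 := by
      by_contra hcon
      push_neg at hcon
      have := div_pos_of_neg_of_neg hcon h2
      linarith
    exact (pow_le_pow_iff_left₀ (norm_nonneg x) (norm_nonneg (x + lam • y)) two_ne_zero).1
      (by linarith)
  · simp
  · have h1 : 0 ≤ sl x y lam := hp.trans (rhoPlus_le_sl x y hlam)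
    rw [sl] at h1
    have h2 : 0 < 2 * lam := by linarith
    have h3 : 0 ≤ ‖x + lam • y‖ ^ 2 - ‖x‖ ^ 2 := by
      by_contra hcon
      push_neg at hcon
      have := div_neg_of_neg_of_pos hcon h2
      linarith
    exact (pow_le_pow_iff_left₀ (norm_nonneg x) (norm_nonneg (x + lam • y)) two_ne_zero).1
      (by linarith)

lemma rhoPlus_nonneg_of_borth {x y : E} (h : ∀ lam : ℝ, ‖x‖ ≤ ‖x + lam • y‖) :
    0 ≤ rhoPlus x y := by
  refine ge_of_tendsto (tendsto_sl_plus x y) ?_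
  filter_upwards [self_mem_nhdsWithin] with t (ht : t ∈ Ioi (0:ℝ))
  rw [sl]
  apply div_nonneg _ (by simpa using (mem_Ioi.1 ht).le)
  have := pow_le_pow_left₀ (norm_nonneg x) (h t) 2
  linarith

lemma rhoMinus_nonpos_of_borth {x y : E} (h : ∀ lam : ℝ, ‖x‖ ≤ ‖x + lam • y‖) :
    rhoMinus x y ≤ 0 := by
  rw [rhoMinus_eq_neg]
  have : 0 ≤ rhoPlus x (-y) := by
    refine rhoPlus_nonneg_of_borth fun lam => ?_
    have := h (-lam)
    rwa [neg_smul, ← smul_neg] at this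
  linarith

lemma rho_bounds_of_rhoStar_zero {x y : E} (h : rhoMinus x y * rhoPlus x y = 0) :
    rhoMinus x y ≤ 0 ∧ 0 ≤ rhoPlus x y := by
  rcases mul_eq_zero.1 h with h0 | h0
  · exact ⟨le_of_eq h0, h0 ▸ rhoMinus_le_rhoPlus x y⟩
  · exact ⟨h0 ▸ rhoMinus_le_rhoPlus x y, le_of_eq h0.symm⟩

lemma slope_eq_sl (x y : E) (t s : ℝ) :
    slope (fun s : ℝ => ‖x + s • y‖ ^ 2) t s = 2 * sl (x + t • y) y (s - t) := by
  rw [slope_def_field, sl]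
  have h : x + s • y = (x + t • y) + (s - t) • y := by module
  rw [h]
  rcases eq_or_ne s t with rfl | hst
  · simp
  · have hst' : s - t ≠ 0 := sub_ne_zero.2 hst
    field_simp

lemma hasDerivWithinAt_right (x y : E) (t : ℝ) :
    HasDerivWithinAt (fun s : ℝ => ‖x + s • y‖ ^ 2) (2 * rhoPlus (x + t • y) y) (Ici t) t := by
  rw [hasDerivWithinAt_iff_tendsto_slope, Ici_sdiff_left]
  have hmap : Tendsto (fun s : ℝ => s - t) (𝓝[>] t) (𝓝[>] (0:ℝ)) := by
    rw [tendsto_nhdsWithin_iff]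
    constructor
    · have hco : Continuous (fun s : ℝ => s - t) := by continuity
      have := (hco.tendsto t).mono_left (nhdsWithin_le_nhds (s := Ioi t))
      simpa using this
    · filter_upwards [self_mem_nhdsWithin] with s (hs : t < s)
      simpa using hs
  have := ((tendsto_sl_plus (x + t • y) y).comp hmap).const_mul 2
  refine this.congr fun s => ?_
  rw [slope_eq_sl]
  rfl

lemma hasDerivWithinAt_left (x y : E) (t : ℝ) :
    HasDerivWithinAt (fun s : ℝ => ‖x + s • y‖ ^ 2) (2 * rhoMinus (x + t • y) y) (Iic t) t := by
  rw [hasDerivWithinAt_iff_tendsto_slope, Iic_diff_right]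
  have hmap : Tendsto (fun s : ℝ => s - t) (𝓝[<] t) (𝓝[<] (0:ℝ)) := by
    rw [tendsto_nhdsWithin_iff]
    constructor
    · have hco : Continuous (fun s : ℝ => s - t) := by continuity
      have := (hco.tendsto t).mono_left (nhdsWithin_le_nhds (s := Iio t))
      simpa using this
    · filter_upwards [self_mem_nhdsWithin] with s (hs : s < t)
      simpa using hs
  have := ((tendsto_sl_minus (x + t • y) y).comp hmap).const_mul 2
  refine this.congr fun s => ?_
  rw [slope_eq_sl]
  rfl

lemma mono_of_right_deriv {F F' : ℝ → ℝ} {a b : ℝ} (hab : a ≤ b)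
    (hcont : ContinuousOn F (Icc a b))
    (hder : ∀ t ∈ Ico a b, HasDerivWithinAt F (F' t) (Ici t) t)
    (hpos : ∀ t ∈ Ico a b, 0 ≤ F' t) : F a ≤ F b := by
  have key := image_le_of_deriv_right_le_deriv_boundary (f := fun s => -F s)
    (f' := fun s => -(F' s)) (a := a) (b := b) hcont.neg
    (fun t ht => (hder t ht).neg) (B := fun _ => -F a) (B' := fun _ => 0)
    le_rfl continuousOn_const (fun t _ => hasDerivWithinAt_const t _ _)
    (fun t ht => by simpa using hpos t ht)
  have := key (right_mem_Icc.2 hab)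
  simpa using this

lemma anti_of_left_deriv {F F' : ℝ → ℝ} {a b : ℝ} (hab : a ≤ b)
    (hcont : ContinuousOn F (Icc a b))
    (hder : ∀ t ∈ Ioc a b, HasDerivWithinAt F (F' t) (Iic t) t)
    (hneg : ∀ t ∈ Ioc a b, F' t ≤ 0) : F b ≤ F a := by
  have hmem : ∀ s ∈ Icc (-b) (-a), -s ∈ Icc a b := by
    intro s hs
    exact ⟨by linarith [hs.2], by linarith [hs.1]⟩
  have hres : F (- (-b)) ≤ F (- (-a)) := by
    refine mono_of_right_deriv (F := fun s => F (-s)) (F' := fun s => -(F' (-s)))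
      (a := -b) (b := -a) (by linarith) ?_ ?_ ?_
    · refine ContinuousOn.comp hcont (continuous_neg.continuousOn) hmem
    · intro s hs
      have hmem2 : (-s) ∈ Ioc a b := ⟨by linarith [hs.2], by linarith [hs.1]⟩
      have hmaps : MapsTo (Neg.neg : ℝ → ℝ) (Ici s) (Iic (-s)) := fun u hu => by
        simp only [mem_Iic]; simp only [mem_Ici] at hu; linarith
      have := HasDerivWithinAt.comp s (hder (-s) hmem2)
        ((hasDerivAt_neg s).hasDerivWithinAt) hmaps
      simpa [Function.comp_def, mul_neg_one] using this
    · intro s hs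
      have hmem2 : (-s) ∈ Ioc a b := ⟨by linarith [hs.2], by linarith [hs.1]⟩
      simpa using hneg (-s) hmem2
  simpa using hres

section Maps

variable {X F : Type*} [NormedAddCommGroup X] [NormedSpace ℝ X]
  [NormedAddCommGroup F] [NormedSpace ℝ F] (T : X →ₗ[ℝ] F)

lemma key_plus
    (hpre : ∀ x y : X, rhoMinus x y * rhoPlus x y = 0 →
      ∀ lam : ℝ, ‖T x‖ ≤ ‖T x + lam • T y‖)
    (u v : X) (hu : u ≠ 0) :
    rhoPlus u v * ‖T u‖ ^ 2 / ‖u‖ ^ 2 ≤ rhoPlus (T u) (T v) := by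
  have hnu : ‖u‖ ≠ 0 := norm_ne_zero_iff.2 hu
  set α := -(rhoPlus u v / ‖u‖ ^ 2) with hα
  have h0 : rhoPlus u (α • u + v) = 0 := by
    rw [rhoPlus_smul_add, hα]
    field_simp
    ring
  have horth := hpre u (α • u + v) (by rw [h0, mul_zero])
  have hplus := rhoPlus_nonneg_of_borth horth
  have hTw : T (α • u + v) = α • T u + T v := by
    rw [map_add, map_smul]
  rw [hTw, rhoPlus_smul_add] at hplus
  have hαval : α * ‖T u‖ ^ 2 = -(rhoPlus u v * ‖T u‖ ^ 2 / ‖u‖ ^ 2) := by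
    rw [hα]; field_simp
  rw [hαval] at hplus
  linarith

lemma key_minus
    (hpre : ∀ x y : X, rhoMinus x y * rhoPlus x y = 0 →
      ∀ lam : ℝ, ‖T x‖ ≤ ‖T x + lam • T y‖)
    (u v : X) (hu : u ≠ 0) :
    rhoMinus (T u) (T v) ≤ rhoMinus u v * ‖T u‖ ^ 2 / ‖u‖ ^ 2 := by
  have hnu : ‖u‖ ≠ 0 := norm_ne_zero_iff.2 hu
  set β := -(rhoMinus u v / ‖u‖ ^ 2) with hβ
  have h0 : rhoMinus u (β • u + v) = 0 := by
    rw [rhoMinus_smul_add, hβ]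
    field_simp
    ring
  have horth := hpre u (β • u + v) (by rw [h0, zero_mul])
  have hminus := rhoMinus_nonpos_of_borth horth
  have hTw : T (β • u + v) = β • T u + T v := by
    rw [map_add, map_smul]
  rw [hTw, rhoMinus_smul_add] at hminus
  have hβval : β * ‖T u‖ ^ 2 = -(rhoMinus u v * ‖T u‖ ^ 2 / ‖u‖ ^ 2) := by
    rw [hβ]; field_simp
  rw [hβval] at hminus
  linarith

lemma ratio_const
    (hpre : ∀ x y : X, rhoMinus x y * rhoPlus x y = 0 →
      ∀ lam : ℝ, ‖T x‖ ≤ ‖T x + lam • T y‖)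
    (x v : X) (hne : ∀ t ∈ Icc (0:ℝ) 1, x + t • v ≠ 0) :
    ‖T x‖ ^ 2 * ‖x + v‖ ^ 2 = ‖T x + T v‖ ^ 2 * ‖x‖ ^ 2 := by
  set g := fun s : ℝ => ‖T x + s • T v‖ ^ 2 with hg
  set h := fun s : ℝ => ‖x + s • v‖ ^ 2 with hh
  have hpos : ∀ t ∈ Icc (0:ℝ) 1, 0 < h t := by
    intro t ht
    have := norm_pos_iff.2 (hne t ht)
    positivity
  have hgc : Continuous g := by
    apply Continuous.pow
    exact (continuous_const.add (continuous_id.smul continuous_const)).norm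
  have hhc : Continuous h := by
    apply Continuous.pow
    exact (continuous_const.add (continuous_id.smul continuous_const)).norm
  have hFc : ContinuousOn (fun s => g s / h s) (Icc (0:ℝ) 1) :=
    ContinuousOn.div hgc.continuousOn hhc.continuousOn
      (fun t ht => ne_of_gt (hpos t ht))
  have hTu : ∀ t : ℝ, T (x + t • v) = T x + t • T v := by
    intro t; rw [map_add, map_smul]
  have key1 : (fun s => g s / h s) 0 ≤ (fun s => g s / h s) 1 := by
    refine mono_of_right_deriv (F' := fun t =>
      (2 * rhoPlus (T x + t • T v) (T v) * h t - g t * (2 * rhoPlus (x + t • v) v))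
        / (h t) ^ 2) zero_le_one hFc ?_ ?_
    · intro t ht
      exact (hasDerivWithinAt_right (T x) (T v) t).div (hasDerivWithinAt_right x v t)
        (ne_of_gt (hpos t (Ico_subset_Icc_self ht)))
    · intro t ht
      have htIcc := Ico_subset_Icc_self ht
      have hu : x + t • v ≠ 0 := hne t htIcc
      have hk := key_plus T hpre (x + t • v) v hu
      rw [hTu t] at hk
      have hht : 0 < h t := hpos t htIcc
      have hgt : ‖T x + t • T v‖ ^ 2 = g t := rfl
      have hxt : ‖x + t • v‖ ^ 2 = h t := rfl
      rw [hgt, hxt] at hk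
      rw [div_le_iff₀ hht] at hk
      have hnum : 0 ≤ 2 * rhoPlus (T x + t • T v) (T v) * h t
          - g t * (2 * rhoPlus (x + t • v) v) := by nlinarith
      positivity
  have key2 : (fun s => g s / h s) 1 ≤ (fun s => g s / h s) 0 := by
    refine anti_of_left_deriv (F' := fun t =>
      (2 * rhoMinus (T x + t • T v) (T v) * h t - g t * (2 * rhoMinus (x + t • v) v))
        / (h t) ^ 2) zero_le_one hFc ?_ ?_
    · intro t ht
      exact (hasDerivWithinAt_left (T x) (T v) t).div (hasDerivWithinAt_left x v t)
        (ne_of_gt (hpos t (Ioc_subset_Icc_self ht)))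
    · intro t ht
      have htIcc := Ioc_subset_Icc_self ht
      have hu : x + t • v ≠ 0 := hne t htIcc
      have hk := key_minus T hpre (x + t • v) v hu
      rw [hTu t] at hk
      have hht : 0 < h t := hpos t htIcc
      have hgt : ‖T x + t • T v‖ ^ 2 = g t := rfl
      have hxt : ‖x + t • v‖ ^ 2 = h t := rfl
      rw [hgt, hxt] at hk
      rw [le_div_iff₀ hht] at hk
      have hnum : 2 * rhoMinus (T x + t • T v) (T v) * h t
          - g t * (2 * rhoMinus (x + t • v) v) ≤ 0 := by linarith
      exact div_nonpos_of_nonpos_of_nonneg hnum (by positivity)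
  have hFeq : g 0 / h 0 = g 1 / h 1 := le_antisymm key1 key2
  have h00 : g 0 = ‖T x‖ ^ 2 := by simp [hg]
  have h01 : h 0 = ‖x‖ ^ 2 := by simp [hh]
  have h10 : g 1 = ‖T x + T v‖ ^ 2 := by simp [hg]
  have h11 : h 1 = ‖x + v‖ ^ 2 := by simp [hh]
  have hp0 : 0 < h 0 := hpos 0 (by norm_num)
  have hp1 : 0 < h 1 := hpos 1 (by norm_num)
  rw [div_eq_div_iff (ne_of_gt hp0) (ne_of_gt hp1)] at hFeq
  rw [← h00, ← h01, ← h10, ← h11]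
  linarith

end Maps

section Scale

variable {X F : Type*} [NormedAddCommGroup X] [NormedSpace ℝ X]
  [NormedAddCommGroup F] [NormedSpace ℝ F] (T : X →ₗ[ℝ] F)

lemma rhoPlus_scale (c : ℝ) (hc : ∀ x : X, ‖T x‖ = c * ‖x‖) (x y : X) :
    rhoPlus (T x) (T y) = c ^ 2 * rhoPlus x y := by
  have heq : ∀ t : ℝ, sl (T x) (T y) t = c ^ 2 * sl x y t := by
    intro t
    have h1 : T x + t • T y = T (x + t • y) := by rw [map_add, map_smul]
    rw [sl, sl, h1, hc (x + t • y), hc x, mul_pow, mul_pow, ← mul_div_assoc]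
    ring_nf
  have h2 : Tendsto (sl (T x) (T y)) (𝓝[>] 0) (𝓝 (c ^ 2 * rhoPlus x y)) := by
    have := (tendsto_sl_plus x y).const_mul (c ^ 2)
    exact this.congr fun t => (heq t).symm
  exact tendsto_nhds_unique (tendsto_sl_plus (T x) (T y)) h2

lemma rhoMinus_scale (c : ℝ) (hc : ∀ x : X, ‖T x‖ = c * ‖x‖) (x y : X) :
    rhoMinus (T x) (T y) = c ^ 2 * rhoMinus x y := by
  have h1 : -(T y) = T (-y) := by rw [map_neg]
  rw [rhoMinus_eq_neg, h1, rhoPlus_scale T c hc x (-y), rhoMinus_eq_neg]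
  ring

end Scale

end RhoAux

open RhoAux

theorem rhoStar_preserving_tfae {X Y : Type*} [NormedAddCommGroup X] [NormedSpace ℝ X]
    [NormedAddCommGroup Y] [NormedSpace ℝ Y] (hdim : 2 ≤ Module.rank ℝ X)
    (T : X →ₗ[ℝ] Y) (hT : T ≠ 0) :
    List.TFAE
      [ ∀ x y : X, rhoStar x y = 0 → rhoStar (T x) (T y) = 0,
        ∀ x y : X, rhoStar x y = 0 → ∀ lam : ℝ, ‖T x‖ ≤ ‖T x + lam • T y‖,
        ∀ x : X, ‖T x‖ = opNorm T * ‖x‖,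
        ∀ x y : X, rhoStar (T x) (T y) = opNorm T ^ 4 * rhoStar x y ] := by
  tfae_have 3 → 4 := by
    intro h3 x y
    rw [rhoStar, rhoStar, rhoPlus_scale T (opNorm T) h3, rhoMinus_scale T (opNorm T) h3]
    ring
  tfae_have 4 → 1 := by
    intro h4 x y hxy
    rw [h4, hxy, mul_zero]
  tfae_have 1 → 2 := by
    intro h1 x y hxy lam
    have h0 : rhoMinus (T x) (T y) * rhoPlus (T x) (T y) = 0 := h1 x y hxy
    obtain ⟨hm, hp⟩ := rho_bounds_of_rhoStar_zero h0
    exact norm_le_of_rho hm hp lam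
  tfae_have 2 → 3 := by
    intro h2
    have hpre : ∀ x y : X, rhoMinus x y * rhoPlus x y = 0 →
        ∀ lam : ℝ, ‖T x‖ ≤ ‖T x + lam • T y‖ := fun x y h => h2 x y h
    obtain ⟨x₀, hTx₀⟩ : ∃ x₀ : X, T x₀ ≠ 0 := by
      by_contra hcon
      push_neg at hcon
      exact hT (by ext z; simp [hcon z])
    have hx₀ : x₀ ≠ 0 := fun h => hTx₀ (by simp [h])
    have hnx₀ : ‖x₀‖ ≠ 0 := norm_ne_zero_iff.2 hx₀
    -- pair lemma
    have hpair : ∀ a b : X, a ≠ 0 → b ≠ 0 → ‖T a‖ * ‖b‖ = ‖T b‖ * ‖a‖ := by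
      intro a b ha hb
      by_cases hdep : ∃ k : ℝ, b = k • a
      · obtain ⟨k, rfl⟩ := hdep
        rw [map_smul, norm_smul, norm_smul]
        ring
      · push_neg at hdep
        set v := b - a with hv
        have hne : ∀ t ∈ Icc (0:ℝ) 1, a + t • v ≠ 0 := by
          intro t ht hzero
          rcases eq_or_ne t 0 with rfl | ht0
          · simp only [zero_smul, add_zero] at hzero
            exact ha hzero
          · have h' : t • b - (t - 1) • a = a + t • (b - a) := by module
            rw [hv] at hzero
            rw [hzero] at h'
            have h'' : t • b = (t - 1) • a := sub_eq_zero.1 h'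
            have hb' : b = (t⁻¹ * (t - 1)) • a := by
              calc b = t⁻¹ • (t • b) := by
                    rw [smul_smul, inv_mul_cancel₀ ht0, one_smul]
                _ = t⁻¹ • ((t - 1) • a) := by rw [h'']
                _ = (t⁻¹ * (t - 1)) • a := smul_smul _ _ _
            exact hdep _ hb'
        have hrat := ratio_const T hpre a v hne
        have hav : a + v = b := by rw [hv]; abel
        have hTav : T a + T v = T b := by rw [← map_add, hav]
        rw [hav, hTav] at hrat
        have hsq : (‖T a‖ * ‖b‖) ^ 2 = (‖T b‖ * ‖a‖) ^ 2 := by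
          rw [mul_pow, mul_pow]
          linarith
        exact (sq_eq_sq₀ (by positivity) (by positivity)).1 hsq
    set c := ‖T x₀‖ / ‖x₀‖ with hc
    have hnorm : ∀ x : X, ‖T x‖ = c * ‖x‖ := by
      intro x
      rcases eq_or_ne x 0 with rfl | hx
      · simp
      · have := hpair x x₀ hx hx₀
        rw [hc]
        field_simp
        linarith [this]
    have hop : opNorm T = c := by
      have hset : {c' : ℝ | ∃ x : X, ‖x‖ = 1 ∧ c' = ‖T x‖} = {c} := by
        ext c'
        simp only [Set.mem_setOf_eq, Set.mem_singleton_iff]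
        constructor
        · rintro ⟨x, hx1, rfl⟩
          rw [hnorm x, hx1, mul_one]
        · rintro rfl
          refine ⟨‖x₀‖⁻¹ • x₀, ?_, ?_⟩
          · rw [norm_smul, norm_inv, norm_norm, inv_mul_cancel₀ hnx₀]
          · rw [hnorm, norm_smul, norm_inv, norm_norm, inv_mul_cancel₀ hnx₀, mul_one]
      rw [opNorm, hset, csSup_singleton]
    intro x
    rw [hop]
    exact hnorm x
  tfae_finish
end

section
/- Let X be a real normed space of dimension at least 2 and T : X → X a nonzero linear mapping satisfying ‖Tx‖ = ‖T‖·‖x‖ for all x ∈ X (where ‖T‖ is the operator norm). Then there exists a semi-inner product [·|·] : X × X → ℝ such that [Tx|Ty] = ‖T‖²·[x|y] for all x,y ∈ X. -/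
open Filter Topology

theorem exists_sip_of_similarity {X : Type*} [NormedAddCommGroup X] [NormedSpace ℝ X]
    (hdim : 2 ≤ Module.rank ℝ X) (T : X →ₗ[ℝ] X) (hT : T ≠ 0)
    (hsim : ∀ x : X, ‖T x‖ = opNorm T * ‖x‖) :
    ∃ sip : X → X → ℝ,
      (∀ (r t : ℝ) (x y z : X), sip (r • x + t • y) z = r * sip x z + t * sip y z) ∧
      (∀ x : X, sip x x = ‖x‖ ^ 2) ∧
      (∀ x y : X, |sip x y| ≤ ‖x‖ * ‖y‖) ∧
      (∀ x y : X, sip (T x) (T y) = opNorm T ^ 2 * sip x y) := by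
  classical
  set k := opNorm T with hk_def
  obtain ⟨x₀, hx₀⟩ : ∃ x : X, T x ≠ 0 := by
    by_contra h
    push_neg at h
    exact hT (LinearMap.ext fun x => by simpa using h x)
  have hx₀' : x₀ ≠ 0 := fun h => hx₀ (by simp [h])
  have hnt : Nontrivial X := nontrivial_of_ne x₀ 0 hx₀'
  have hk : 0 < k := by
    have h1 : 0 < ‖T x₀‖ := norm_pos_iff.mpr hx₀
    have h2 : 0 < ‖x₀‖ := norm_pos_iff.mpr hx₀'
    nlinarith [hsim x₀]
  have hkne : k ≠ 0 := ne_of_gt hk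
  -- base supporting functionals
  have hgex : ∀ y : X, ∃ g : X →L[ℝ] ℝ, ‖g‖ ≤ 1 ∧ g y = ‖y‖ := by
    intro y
    rcases eq_or_ne y 0 with rfl | hy
    · exact ⟨0, by simp, by simp⟩
    · obtain ⟨g, hg1, hg2⟩ := exists_dual_vector ℝ y (norm_ne_zero_iff.mpr hy)
      exact ⟨g, le_of_eq hg1, by simpa using hg2⟩
  choose g hg1 hg2 using hgex
  set f : X → X → ℝ := fun x y => ‖y‖ * g y x with hf_def
  have hf_lin : ∀ (r t : ℝ) (x y z : X), f (r • x + t • y) z = r * f x z + t * f y z := by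
    intro r t x y z
    simp only [hf_def, map_add, map_smul, smul_eq_mul]
    ring
  have hf_self : ∀ y : X, f y y = ‖y‖ ^ 2 := by
    intro y
    simp only [hf_def, hg2 y]
    ring
  have hf_bound : ∀ x y : X, |f x y| ≤ ‖x‖ * ‖y‖ := by
    intro x y
    have h1 : |g y x| ≤ ‖x‖ := by
      calc |g y x| = ‖g y x‖ := (Real.norm_eq_abs _).symm
        _ ≤ ‖g y‖ * ‖x‖ := (g y).le_opNorm x
        _ ≤ 1 * ‖x‖ := by gcongr; exact hg1 y
        _ = ‖x‖ := one_mul _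
    calc |f x y| = ‖y‖ * |g y x| := by
          rw [hf_def]; rw [abs_mul, abs_of_nonneg (norm_nonneg y)]
      _ ≤ ‖y‖ * ‖x‖ := by gcongr
      _ = ‖x‖ * ‖y‖ := mul_comm _ _
  -- iterates
  have hTn : ∀ (j : ℕ) (x : X), ‖(T ^ j) x‖ = k ^ j * ‖x‖ := by
    intro j
    induction j with
    | zero => intro x; simp
    | succ n ih =>
        intro x
        rw [pow_succ, Module.End.mul_apply, ih, hsim x, pow_succ]
        ring
  set c : ℕ → ℝ := fun j => ((k ^ 2)⁻¹) ^ j with hc_def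
  have hc_pos : ∀ j, 0 < c j := fun j => by positivity
  have hc_mul : ∀ j, c j * (k ^ j) ^ 2 = 1 := by
    intro j
    simp only [hc_def]
    rw [show (k ^ j) ^ 2 = (k ^ 2) ^ j by rw [← pow_mul, ← pow_mul, Nat.mul_comm],
      ← mul_pow, inv_mul_cancel₀ (by positivity), one_pow]
  set tm : ℕ → X → X → ℝ := fun j x y => c j * f ((T ^ j) x) ((T ^ j) y) with htm_def
  have htm_self : ∀ (j : ℕ) (x : X), tm j x x = ‖x‖ ^ 2 := by
    intro j x
    simp only [htm_def, hf_self, hTn]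
    rw [mul_pow, ← mul_assoc, hc_mul, one_mul]
  have htm_bound : ∀ (j : ℕ) (x y : X), |tm j x y| ≤ ‖x‖ * ‖y‖ := by
    intro j x y
    have h1 : |f ((T ^ j) x) ((T ^ j) y)| ≤ (k ^ j) ^ 2 * (‖x‖ * ‖y‖) := by
      calc |f ((T ^ j) x) ((T ^ j) y)| ≤ ‖(T ^ j) x‖ * ‖(T ^ j) y‖ := hf_bound _ _
        _ = (k ^ j) ^ 2 * (‖x‖ * ‖y‖) := by rw [hTn, hTn]; ring
    calc |tm j x y| = c j * |f ((T ^ j) x) ((T ^ j) y)| := by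
          rw [htm_def]; rw [abs_mul, abs_of_pos (hc_pos j)]
      _ ≤ c j * ((k ^ j) ^ 2 * (‖x‖ * ‖y‖)) := by gcongr
      _ = (c j * (k ^ j) ^ 2) * (‖x‖ * ‖y‖) := by ring
      _ = ‖x‖ * ‖y‖ := by rw [hc_mul, one_mul]
  have htm_lin : ∀ (j : ℕ) (r t : ℝ) (x y z : X),
      tm j (r • x + t • y) z = r * tm j x z + t * tm j y z := by
    intro j r t x y z
    simp only [htm_def, map_add, map_smul]
    rw [hf_lin]
    ring
  have htm_shift : ∀ (j : ℕ) (x y : X), tm j (T x) (T y) = k ^ 2 * tm (j + 1) x y := by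
    intro j x y
    have h1 : (T ^ j) (T x) = (T ^ (j + 1)) x := by rw [pow_succ, Module.End.mul_apply]
    have h2 : (T ^ j) (T y) = (T ^ (j + 1)) y := by rw [pow_succ, Module.End.mul_apply]
    have h3 : c j = k ^ 2 * c (j + 1) := by
      simp only [hc_def, pow_succ]
      field_simp
    simp only [htm_def, h1, h2]
    rw [h3]; ring
  set A : ℕ → X → X → ℝ := fun n x y => (n : ℝ)⁻¹ * ∑ j ∈ Finset.range n, tm j x y
    with hA_def
  have hA_self : ∀ n : ℕ, 1 ≤ n → ∀ x : X, A n x x = ‖x‖ ^ 2 := by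
    intro n hn x
    have hne : (n : ℝ) ≠ 0 := Nat.cast_ne_zero.mpr (by omega)
    simp only [hA_def]
    rw [Finset.sum_congr rfl fun j _ => htm_self j x, Finset.sum_const, Finset.card_range,
      nsmul_eq_mul]
    field_simp
  have hA_bound : ∀ (n : ℕ) (x y : X), |A n x y| ≤ ‖x‖ * ‖y‖ := by
    intro n x y
    rcases Nat.eq_zero_or_pos n with rfl | hn
    · simp only [hA_def]
      simp
      positivity
    · have hne : (0:ℝ) < (n : ℝ) := by exact_mod_cast hn
      have h1 : |∑ j ∈ Finset.range n, tm j x y| ≤ (n : ℝ) * (‖x‖ * ‖y‖) := by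
        calc |∑ j ∈ Finset.range n, tm j x y| ≤ ∑ j ∈ Finset.range n, |tm j x y| :=
              Finset.abs_sum_le_sum_abs _ _
          _ ≤ ∑ j ∈ Finset.range n, (‖x‖ * ‖y‖) :=
              Finset.sum_le_sum fun j _ => htm_bound j x y
          _ = (n : ℝ) * (‖x‖ * ‖y‖) := by
              rw [Finset.sum_const, Finset.card_range, nsmul_eq_mul]
      calc |A n x y| = (n : ℝ)⁻¹ * |∑ j ∈ Finset.range n, tm j x y| := by
            rw [hA_def]; rw [abs_mul, abs_of_pos (by positivity)]
        _ ≤ (n : ℝ)⁻¹ * ((n : ℝ) * (‖x‖ * ‖y‖)) := by gcongr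
        _ = ‖x‖ * ‖y‖ := by field_simp
  have hA_lin : ∀ (n : ℕ) (r t : ℝ) (x y z : X),
      A n (r • x + t • y) z = r * A n x z + t * A n y z := by
    intro n r t x y z
    simp only [hA_def]
    rw [Finset.sum_congr rfl fun j _ => htm_lin j r t x y z, Finset.sum_add_distrib,
      ← Finset.mul_sum, ← Finset.mul_sum]
    ring
  have hA_shift : ∀ (n : ℕ) (x y : X),
      A n (T x) (T y) = k ^ 2 * A n x y
        + (n : ℝ)⁻¹ * (k ^ 2 * (tm n x y - tm 0 x y)) := by
    intro n x y
    have h1 : ∑ j ∈ Finset.range n, tm j (T x) (T y)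
        = k ^ 2 * ∑ j ∈ Finset.range n, tm (j + 1) x y := by
      rw [Finset.mul_sum]
      exact Finset.sum_congr rfl fun j _ => htm_shift j x y
    have h2 : ∑ j ∈ Finset.range n, tm (j + 1) x y
        = (∑ j ∈ Finset.range n, tm j x y) + tm n x y - tm 0 x y := by
      have := Finset.sum_range_succ' (fun j => tm j x y) n
      have h3 := Finset.sum_range_succ (fun j => tm j x y) n
      rw [h3] at this
      linarith
    simp only [hA_def]
    rw [h1, h2]
    ring
  -- limits along a nonprincipal ultrafilter
  let U : Ultrafilter ℕ := Ultrafilter.of atTop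
  have hU : (U : Filter ℕ) ≤ atTop := Ultrafilter.of_le _
  have hex : ∀ x y : X, ∃ l : ℝ, Tendsto (fun n => A n x y) (U : Filter ℕ) (𝓝 l) := by
    intro x y
    have hmem : (Set.Icc (-(‖x‖ * ‖y‖)) (‖x‖ * ‖y‖)) ∈ U.map fun n => A n x y := by
      rw [Ultrafilter.mem_map]
      apply Filter.univ_mem'
      intro n
      exact abs_le.mp (hA_bound n x y)
    obtain ⟨l, _, hl⟩ := (isCompact_Icc (a := -(‖x‖ * ‖y‖)) (b := ‖x‖ * ‖y‖)).ultrafilter_le_nhds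
      (U.map fun n => A n x y) (le_principal_iff.mpr hmem)
    exact ⟨l, hl⟩
  choose sip hsip using hex
  refine ⟨sip, ?_, ?_, ?_, ?_⟩
  · intro r t x y z
    have h1 : Tendsto (fun n => r * A n x z + t * A n y z) (U : Filter ℕ)
        (𝓝 (r * sip x z + t * sip y z)) :=
      ((hsip x z).const_mul r).add ((hsip y z).const_mul t)
    have h2 : Tendsto (fun n => A n (r • x + t • y) z) (U : Filter ℕ)
        (𝓝 (r * sip x z + t * sip y z)) :=
      h1.congr fun n => (hA_lin n r t x y z).symm
    exact tendsto_nhds_unique (hsip _ _) h2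
  · intro x
    have h1 : ∀ᶠ n in (U : Filter ℕ), A n x x = ‖x‖ ^ 2 := by
      apply Eventually.filter_mono hU
      filter_upwards [eventually_ge_atTop 1] with n hn
      exact hA_self n hn x
    have h2 : Tendsto (fun n => A n x x) (U : Filter ℕ) (𝓝 (‖x‖ ^ 2)) :=
      (tendsto_const_nhds : Tendsto (fun _ : ℕ => ‖x‖ ^ 2) (U : Filter ℕ)
        (𝓝 (‖x‖ ^ 2))).congr' (h1.mono fun n hn => hn.symm)
    exact tendsto_nhds_unique (hsip x x) h2
  · intro x y
    have h1 : Tendsto (fun n => |A n x y|) (U : Filter ℕ) (𝓝 |sip x y|) := (hsip x y).abs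
    exact le_of_tendsto h1 (Eventually.of_forall fun n => hA_bound n x y)
  · intro x y
    set ε : ℕ → ℝ := fun n => (n : ℝ)⁻¹ * (k ^ 2 * (tm n x y - tm 0 x y)) with hε_def
    have hε0 : Tendsto ε atTop (𝓝 0) := by
      apply squeeze_zero_norm (a := fun n : ℕ => (k ^ 2 * (2 * (‖x‖ * ‖y‖))) / (n : ℝ))
      · intro n
        have h1 : |k ^ 2 * (tm n x y - tm 0 x y)| ≤ k ^ 2 * (2 * (‖x‖ * ‖y‖)) := by
          rw [abs_mul, abs_of_pos (by positivity : (0:ℝ) < k ^ 2)]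
          have := htm_bound n x y
          have := htm_bound 0 x y
          have h2 : |tm n x y - tm 0 x y| ≤ |tm n x y| + |tm 0 x y| := abs_sub _ _
          nlinarith [sq_nonneg k, hk]
        rcases Nat.eq_zero_or_pos n with rfl | hn
        · simp [hε_def]
        · have hne : (0:ℝ) < (n : ℝ) := by exact_mod_cast hn
          rw [Real.norm_eq_abs, hε_def]
          rw [abs_mul, abs_of_pos (by positivity : (0:ℝ) < (n:ℝ)⁻¹), div_eq_inv_mul]
          gcongr
      · exact tendsto_const_div_atTop_nhds_zero_nat _
    have h1 : Tendsto (fun n => k ^ 2 * A n x y + ε n) (U : Filter ℕ)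
        (𝓝 (k ^ 2 * sip x y + 0)) :=
      ((hsip x y).const_mul _).add (hε0.mono_left hU)
    rw [add_zero] at h1
    have h2 : Tendsto (fun n => A n (T x) (T y)) (U : Filter ℕ) (𝓝 (k ^ 2 * sip x y)) :=
      h1.congr fun n => (hA_shift n x y).symm
    exact tendsto_nhds_unique (hsip _ _) h2
end

section
/- Suppose there exist a real normed space Y whose norm satisfies the δ-parallelogram law for some δ ∈ [0,1) and a nonzero linear mapping T : X → Y such that for all x,y ∈ X, x ⊥_{ρ*} y implies Tx ⊥_{ρ*} Ty. Then X is equivalent to an inner product space: there exist an inner product on X with generated norm |||·||| and a constant k ≥ 1 such that (1/k)‖x‖ ≤ |||x||| ≤ k‖x‖ for all x ∈ X. -/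
open Filter Topology

open Set

section Rho
variable {E : Type*} [NormedAddCommGroup E] [NormedSpace ℝ E]

private lemma norm_line_convex (x y : E) :
    ConvexOn ℝ Set.univ (fun t : ℝ => ‖x + t • y‖) := by
  refine ⟨convex_univ, fun s _ t _ a b ha hb hab => ?_⟩
  have key : x + (a * s + b * t) • y = a • (x + s • y) + b • (x + t • y) := by
    have hx : x = a • x + b • x := by rw [← add_smul, hab, one_smul]
    nth_rewrite 1 [hx]
    simp only [smul_eq_mul, add_smul, mul_smul, smul_add]
    abel
  show ‖x + (a • s + b • t) • y‖ ≤ a • ‖x + s • y‖ + b • ‖x + t • y‖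
  rw [smul_eq_mul, smul_eq_mul, key]
  calc ‖a • (x + s • y) + b • (x + t • y)‖
      ≤ ‖a • (x + s • y)‖ + ‖b • (x + t • y)‖ := norm_add_le _ _
    _ = a * ‖x + s • y‖ + b * ‖x + t • y‖ := by
        rw [norm_smul, norm_smul, Real.norm_eq_abs, Real.norm_eq_abs, abs_of_nonneg ha,
          abs_of_nonneg hb]
  -- goal should be closed; the `≤ a • ... + b • ...` uses smul_eq_mul

/-- slope of `t ↦ ‖x + t•y‖` through `0`. -/
noncomputable def rdq (x y : E) (t : ℝ) : ℝ := (‖x + t • y‖ - ‖x‖) / t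

private lemma rdq_mono {x y : E} {s t : ℝ} (hs : s ≠ 0) (ht : t ≠ 0) (hst : s ≤ t) :
    rdq x y s ≤ rdq x y t := by
  have h := (norm_line_convex x y).secant_mono (a := 0) (x := s) (y := t)
    (Set.mem_univ _) (Set.mem_univ _) (Set.mem_univ _) hs ht hst
  simpa [rdq] using h

private lemma abs_rdq_le (x y : E) {t : ℝ} (ht : t ≠ 0) : |rdq x y t| ≤ ‖y‖ := by
  have h1 : |‖x + t • y‖ - ‖x‖| ≤ ‖t • y‖ := by
    have := abs_norm_sub_norm_le (x + t • y) x
    simpa using this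
  rw [rdq, abs_div]
  rw [norm_smul, Real.norm_eq_abs] at h1
  rw [div_le_iff₀ (abs_pos.2 ht)]
  calc |‖x + t • y‖ - ‖x‖| ≤ |t| * ‖y‖ := h1
    _ = ‖y‖ * |t| := mul_comm _ _

noncomputable def rderiv (x y : E) : ℝ := sInf (rdq x y '' Set.Ioi 0)
noncomputable def lderiv (x y : E) : ℝ := sSup (rdq x y '' Set.Iio 0)

private lemma tendsto_rdq_rderiv (x y : E) :
    Tendsto (rdq x y) (𝓝[>] 0) (𝓝 (rderiv x y)) := by
  apply MonotoneOn.tendsto_nhdsGT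
  · exact fun s hs t ht hst => rdq_mono (ne_of_gt hs) (ne_of_gt ht) hst
  · exact ⟨-‖y‖, fun r ⟨t, ht, h⟩ => h ▸ (abs_le.1 (abs_rdq_le x y (ne_of_gt ht))).1⟩

private lemma tendsto_rdq_lderiv (x y : E) :
    Tendsto (rdq x y) (𝓝[<] 0) (𝓝 (lderiv x y)) := by
  apply MonotoneOn.tendsto_nhdsLT
  · exact fun s hs t ht hst => rdq_mono (ne_of_lt hs) (ne_of_lt ht) hst
  · exact ⟨‖y‖, fun r ⟨t, ht, h⟩ => h ▸ (abs_le.1 (abs_rdq_le x y (ne_of_lt ht))).2⟩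

private lemma abs_rderiv_le (x y : E) : |rderiv x y| ≤ ‖y‖ := by
  have h1 : rderiv x y ≤ ‖y‖ := by
    have := le_of_tendsto (tendsto_rdq_rderiv x y)
      (eventually_nhdsWithin_of_forall (fun t (ht : t ∈ Ioi (0:ℝ)) =>
        (abs_le.1 (abs_rdq_le x y (ne_of_gt ht))).2))
    exact this
  have h2 : -‖y‖ ≤ rderiv x y :=
    ge_of_tendsto (tendsto_rdq_rderiv x y)
      (eventually_nhdsWithin_of_forall (fun t (ht : t ∈ Ioi (0:ℝ)) =>
        (abs_le.1 (abs_rdq_le x y (ne_of_gt ht))).1))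
  exact abs_le.2 ⟨h2, h1⟩

private lemma abs_lderiv_le (x y : E) : |lderiv x y| ≤ ‖y‖ := by
  have h1 : lderiv x y ≤ ‖y‖ :=
    le_of_tendsto (tendsto_rdq_lderiv x y)
      (eventually_nhdsWithin_of_forall (fun t (ht : t ∈ Iio (0:ℝ)) =>
        (abs_le.1 (abs_rdq_le x y (ne_of_lt ht))).2))
  have h2 : -‖y‖ ≤ lderiv x y :=
    ge_of_tendsto (tendsto_rdq_lderiv x y)
      (eventually_nhdsWithin_of_forall (fun t (ht : t ∈ Iio (0:ℝ)) =>
        (abs_le.1 (abs_rdq_le x y (ne_of_lt ht))).1))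
  exact abs_le.2 ⟨h2, h1⟩

private lemma lderiv_le_rderiv (x y : E) : lderiv x y ≤ rderiv x y := by
  refine csSup_le ⟨rdq x y (-1), ⟨-1, by norm_num, rfl⟩⟩ ?_
  rintro r ⟨s, hs, rfl⟩
  refine le_csInf ⟨rdq x y 1, ⟨1, by norm_num, rfl⟩⟩ ?_
  rintro r ⟨t, ht, rfl⟩
  exact rdq_mono (ne_of_lt hs) (ne_of_gt ht) (le_of_lt (lt_trans hs ht))

private lemma tendsto_norm_line (x y : E) (l : Filter ℝ) (hl : l ≤ 𝓝 0) :
    Tendsto (fun t : ℝ => ‖x + t • y‖) l (𝓝 ‖x‖) := by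
  have hc : Continuous fun t : ℝ => ‖x + t • y‖ := by continuity
  have := hc.tendsto 0
  simp only [zero_smul, add_zero] at this
  exact this.comp (tendsto_id.mono_left hl) |>.congr (fun t => rfl)

lemma tendsto_rhoPlus_aux (x y : E) :
    Tendsto (fun t : ℝ => (‖x + t • y‖ ^ 2 - ‖x‖ ^ 2) / (2 * t)) (𝓝[>] 0)
      (𝓝 (‖x‖ * rderiv x y)) := by
  have h1 : Tendsto (fun t : ℝ => ‖x + t • y‖) (𝓝[>] 0) (𝓝 ‖x‖) :=
    tendsto_norm_line x y _ nhdsWithin_le_nhds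
  have h2 : Tendsto (fun t : ℝ => rdq x y t * ((‖x + t • y‖ + ‖x‖) / 2)) (𝓝[>] 0)
      (𝓝 (rderiv x y * ((‖x‖ + ‖x‖) / 2))) :=
    (tendsto_rdq_rderiv x y).mul ((h1.add tendsto_const_nhds).div_const 2)
  have heq : ∀ t ∈ Ioi (0:ℝ),
      rdq x y t * ((‖x + t • y‖ + ‖x‖) / 2) = (‖x + t • y‖ ^ 2 - ‖x‖ ^ 2) / (2 * t) := by
    intro t ht
    have ht' : t ≠ 0 := ne_of_gt ht
    rw [rdq]
    field_simp
    ring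
  have h3 := h2.congr' (eventually_nhdsWithin_of_forall heq)
  convert h3 using 2
  ring

lemma tendsto_rhoMinus_aux (x y : E) :
    Tendsto (fun t : ℝ => (‖x + t • y‖ ^ 2 - ‖x‖ ^ 2) / (2 * t)) (𝓝[<] 0)
      (𝓝 (‖x‖ * lderiv x y)) := by
  have h1 : Tendsto (fun t : ℝ => ‖x + t • y‖) (𝓝[<] 0) (𝓝 ‖x‖) :=
    tendsto_norm_line x y _ nhdsWithin_le_nhds
  have h2 : Tendsto (fun t : ℝ => rdq x y t * ((‖x + t • y‖ + ‖x‖) / 2)) (𝓝[<] 0)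
      (𝓝 (lderiv x y * ((‖x‖ + ‖x‖) / 2))) :=
    (tendsto_rdq_lderiv x y).mul ((h1.add tendsto_const_nhds).div_const 2)
  have heq : ∀ t ∈ Iio (0:ℝ),
      rdq x y t * ((‖x + t • y‖ + ‖x‖) / 2) = (‖x + t • y‖ ^ 2 - ‖x‖ ^ 2) / (2 * t) := by
    intro t ht
    have ht' : t ≠ 0 := ne_of_lt ht
    rw [rdq]
    field_simp
    ring
  have h3 := h2.congr' (eventually_nhdsWithin_of_forall heq)
  convert h3 using 2
  ring

lemma rhoPlus_eq (x y : E) : rhoPlus x y = ‖x‖ * rderiv x y :=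
  (tendsto_rhoPlus_aux x y).limUnder_eq

lemma rhoMinus_eq_s10 (x y : E) : rhoMinus x y = ‖x‖ * lderiv x y :=
  (tendsto_rhoMinus_aux x y).limUnder_eq

lemma tendsto_rhoPlus (x y : E) :
    Tendsto (fun t : ℝ => (‖x + t • y‖ ^ 2 - ‖x‖ ^ 2) / (2 * t)) (𝓝[>] 0)
      (𝓝 (rhoPlus x y)) := by
  rw [rhoPlus_eq]; exact tendsto_rhoPlus_aux x y

lemma tendsto_rhoMinus (x y : E) :
    Tendsto (fun t : ℝ => (‖x + t • y‖ ^ 2 - ‖x‖ ^ 2) / (2 * t)) (𝓝[<] 0)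
      (𝓝 (rhoMinus x y)) := by
  rw [rhoMinus_eq_s10]; exact tendsto_rhoMinus_aux x y

lemma abs_rhoPlus_le (x y : E) : |rhoPlus x y| ≤ ‖x‖ * ‖y‖ := by
  rw [rhoPlus_eq, abs_mul, abs_norm]
  exact mul_le_mul_of_nonneg_left (abs_rderiv_le x y) (norm_nonneg x)

lemma abs_rhoMinus_le (x y : E) : |rhoMinus x y| ≤ ‖x‖ * ‖y‖ := by
  rw [rhoMinus_eq_s10, abs_mul, abs_norm]
  exact mul_le_mul_of_nonneg_left (abs_lderiv_le x y) (norm_nonneg x)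

lemma rhoMinus_le_rhoPlus (x y : E) : rhoMinus x y ≤ rhoPlus x y := by
  rw [rhoPlus_eq, rhoMinus_eq_s10]
  exact mul_le_mul_of_nonneg_left (lderiv_le_rderiv x y) (norm_nonneg x)

end Rho

section RhoTransform
variable {E : Type*} [NormedAddCommGroup E] [NormedSpace ℝ E]

private lemma tendsto_neg_Ioi : Tendsto (fun t : ℝ => -t) (𝓝[>] 0) (𝓝[<] 0) := by
  rw [tendsto_nhdsWithin_iff]
  constructor
  · have : Tendsto (fun t : ℝ => -t) (𝓝 0) (𝓝 (-0)) := tendsto_neg _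
    simpa using this.mono_left nhdsWithin_le_nhds
  · filter_upwards [self_mem_nhdsWithin] with t ht
    simpa using ht

private lemma tendsto_neg_Iio : Tendsto (fun t : ℝ => -t) (𝓝[<] 0) (𝓝[>] 0) := by
  rw [tendsto_nhdsWithin_iff]
  constructor
  · have : Tendsto (fun t : ℝ => -t) (𝓝 0) (𝓝 (-0)) := tendsto_neg _
    simpa using this.mono_left nhdsWithin_le_nhds
  · filter_upwards [self_mem_nhdsWithin] with t ht
    simpa using ht

private lemma quot_neg_right (x y : E) (t : ℝ) :
    (‖x + t • (-y)‖ ^ 2 - ‖x‖ ^ 2) / (2 * t) =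
      -((‖x + (-t) • y‖ ^ 2 - ‖x‖ ^ 2) / (2 * (-t))) := by
  rw [smul_neg, ← neg_smul]
  rw [mul_neg, div_neg, neg_neg]

lemma rhoPlus_neg_right (x y : E) : rhoPlus x (-y) = -rhoMinus x y := by
  apply Tendsto.limUnder_eq
  have h : Tendsto (fun t : ℝ =>
      -((‖x + (-t) • y‖ ^ 2 - ‖x‖ ^ 2) / (2 * (-t)))) (𝓝[>] 0) (𝓝 (-rhoMinus x y)) :=
    (((tendsto_rhoMinus x y).comp tendsto_neg_Ioi)).neg
  exact h.congr (fun t => (quot_neg_right x y t).symm)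

lemma rhoMinus_neg_right (x y : E) : rhoMinus x (-y) = -rhoPlus x y := by
  apply Tendsto.limUnder_eq
  have h : Tendsto (fun t : ℝ =>
      -((‖x + (-t) • y‖ ^ 2 - ‖x‖ ^ 2) / (2 * (-t)))) (𝓝[<] 0) (𝓝 (-rhoPlus x y)) :=
    (((tendsto_rhoPlus x y).comp tendsto_neg_Iio)).neg
  exact h.congr (fun t => (quot_neg_right x y t).symm)

private lemma quot_neg_left (x y : E) (t : ℝ) :
    (‖-x + t • y‖ ^ 2 - ‖-x‖ ^ 2) / (2 * t) =
      -((‖x + (-t) • y‖ ^ 2 - ‖x‖ ^ 2) / (2 * (-t))) := by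
  have h1 : ‖-x + t • y‖ = ‖x + (-t) • y‖ := by
    rw [show -x + t • y = -(x + (-t) • y) by rw [neg_smul]; abel, norm_neg]
  rw [h1, norm_neg, mul_neg, div_neg, neg_neg]

lemma rhoPlus_neg_left (x y : E) : rhoPlus (-x) y = -rhoMinus x y := by
  apply Tendsto.limUnder_eq
  have h : Tendsto (fun t : ℝ =>
      -((‖x + (-t) • y‖ ^ 2 - ‖x‖ ^ 2) / (2 * (-t)))) (𝓝[>] 0) (𝓝 (-rhoMinus x y)) :=
    (((tendsto_rhoMinus x y).comp tendsto_neg_Ioi)).neg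
  exact h.congr (fun t => (quot_neg_left x y t).symm)

lemma rhoMinus_neg_left (x y : E) : rhoMinus (-x) y = -rhoPlus x y := by
  apply Tendsto.limUnder_eq
  have h : Tendsto (fun t : ℝ =>
      -((‖x + (-t) • y‖ ^ 2 - ‖x‖ ^ 2) / (2 * (-t)))) (𝓝[<] 0) (𝓝 (-rhoPlus x y)) :=
    (((tendsto_rhoPlus x y).comp tendsto_neg_Iio)).neg
  exact h.congr (fun t => (quot_neg_left x y t).symm)

private lemma vec_transform (x y : E) {a b t : ℝ} (h : 1 + t * b ≠ 0) :
    x + t • (a • y + b • x) = (1 + t * b) • (x + (t * a / (1 + t * b)) • y) := by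
  have hφ : (1 + t * b) * (t * a / (1 + t * b)) = t * a := by field_simp
  rw [smul_add t, smul_smul, smul_smul]
  rw [smul_add (1 + t * b), smul_smul, hφ, add_smul, one_smul]
  abel

private lemma scalar_transform {A c t a b : ℝ} (ht : t ≠ 0) (hb : 1 + t * b ≠ 0)
    (ha : a ≠ 0) :
    ((1 + t * b) ^ 2 * A ^ 2 - c ^ 2) / (2 * t) =
      (1 + t * b) * a * ((A ^ 2 - c ^ 2) / (2 * (t * a / (1 + t * b)))) +
        (b + t * b ^ 2 / 2) * c ^ 2 := by
  field_simp
  ring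

lemma rhoPlus_smul_add (x y : E) {a : ℝ} (ha : 0 < a) (b : ℝ) :
    rhoPlus x (a • y + b • x) = a * rhoPlus x y + b * ‖x‖ ^ 2 := by
  apply Tendsto.limUnder_eq
  set ε : ℝ := 1 / (|b| + 1) with hε
  have hεpos : 0 < ε := by positivity
  have hmem : Ioo (0:ℝ) ε ∈ 𝓝[>] (0:ℝ) := Ioo_mem_nhdsGT_of_mem ⟨le_refl _, hεpos⟩
  have hb_pos : ∀ t ∈ Ioo (0:ℝ) ε, 0 < 1 + t * b := by
    intro t ht
    have h1 : t * |b| < ε * (|b| + 1) := by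
      calc t * |b| ≤ t * (|b| + 1) := by nlinarith [ht.1.le]
        _ < ε * (|b| + 1) := by nlinarith [ht.1, ht.2, abs_nonneg b]
    rw [hε] at h1
    have h2 : (1 / (|b| + 1)) * (|b| + 1) = 1 := by
      field_simp
    rw [h2] at h1
    nlinarith [neg_abs_le (t * b), abs_mul t b, abs_of_pos ht.1]
  -- tendsto of φ
  have hφcont : Tendsto (fun t : ℝ => t * a / (1 + t * b)) (𝓝 0) (𝓝 0) := by
    have : ContinuousAt (fun t : ℝ => t * a / (1 + t * b)) 0 := by
      apply ContinuousAt.div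
      · exact continuousAt_id.mul continuousAt_const
      · exact continuousAt_const.add (continuousAt_id.mul continuousAt_const)
      · norm_num
    simpa using this.tendsto
  have hφ : Tendsto (fun t : ℝ => t * a / (1 + t * b)) (𝓝[>] 0) (𝓝[>] 0) := by
    rw [tendsto_nhdsWithin_iff]
    refine ⟨hφcont.mono_left nhdsWithin_le_nhds, ?_⟩
    filter_upwards [hmem] with t ht
    exact div_pos (mul_pos ht.1 ha) (hb_pos t ht)
  have hQ : Tendsto (fun t : ℝ =>
      (‖x + (t * a / (1 + t * b)) • y‖ ^ 2 - ‖x‖ ^ 2) / (2 * (t * a / (1 + t * b))))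
      (𝓝[>] 0) (𝓝 (rhoPlus x y)) := (tendsto_rhoPlus x y).comp hφ
  have hfac : Tendsto (fun t : ℝ => (1 + t * b) * a) (𝓝[>] 0) (𝓝 a) := by
    have : ContinuousAt (fun t : ℝ => (1 + t * b) * a) 0 := by fun_prop
    have h := this.tendsto.mono_left (nhdsWithin_le_nhds (s := Ioi (0:ℝ)))
    simpa using h
  have hfac2 : Tendsto (fun t : ℝ => (b + t * b ^ 2 / 2) * ‖x‖ ^ 2) (𝓝[>] 0)
      (𝓝 (b * ‖x‖ ^ 2)) := by
    have : ContinuousAt (fun t : ℝ => (b + t * b ^ 2 / 2) * ‖x‖ ^ 2) 0 := by fun_prop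
    have h := this.tendsto.mono_left (nhdsWithin_le_nhds (s := Ioi (0:ℝ)))
    simpa using h
  have htot : Tendsto (fun t : ℝ =>
      (1 + t * b) * a *
        ((‖x + (t * a / (1 + t * b)) • y‖ ^ 2 - ‖x‖ ^ 2) / (2 * (t * a / (1 + t * b)))) +
        (b + t * b ^ 2 / 2) * ‖x‖ ^ 2) (𝓝[>] 0)
      (𝓝 (a * rhoPlus x y + b * ‖x‖ ^ 2)) := (hfac.mul hQ).add hfac2
  apply htot.congr'
  filter_upwards [hmem] with t ht
  have h1 := hb_pos t ht
  rw [vec_transform x y h1.ne', norm_smul, Real.norm_eq_abs, abs_of_pos h1, mul_pow]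
  exact (scalar_transform ht.1.ne' h1.ne' ha.ne').symm

lemma rhoMinus_smul_add (x y : E) {a : ℝ} (ha : 0 < a) (b : ℝ) :
    rhoMinus x (a • y + b • x) = a * rhoMinus x y + b * ‖x‖ ^ 2 := by
  apply Tendsto.limUnder_eq
  set ε : ℝ := 1 / (|b| + 1) with hε
  have hεpos : 0 < ε := by positivity
  have hmem : Ioo (-ε) (0:ℝ) ∈ 𝓝[<] (0:ℝ) := Ioo_mem_nhdsLT_of_mem ⟨neg_lt_zero.2 hεpos, le_refl _⟩
  have hb_pos : ∀ t ∈ Ioo (-ε) (0:ℝ), 0 < 1 + t * b := by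
    intro t ht
    have habs : |t| < ε := by
      rw [abs_lt]; exact ⟨ht.1, lt_trans ht.2 hεpos⟩
    have h1 : |t| * |b| < ε * (|b| + 1) := by
      nlinarith [abs_nonneg t, abs_nonneg b, habs]
    rw [hε] at h1
    have h2 : (1 / (|b| + 1)) * (|b| + 1) = 1 := by field_simp
    rw [h2] at h1
    nlinarith [neg_abs_le (t * b), abs_mul t b]
  have hφcont : Tendsto (fun t : ℝ => t * a / (1 + t * b)) (𝓝 0) (𝓝 0) := by
    have : ContinuousAt (fun t : ℝ => t * a / (1 + t * b)) 0 := by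
      apply ContinuousAt.div
      · exact continuousAt_id.mul continuousAt_const
      · exact continuousAt_const.add (continuousAt_id.mul continuousAt_const)
      · norm_num
    simpa using this.tendsto
  have hφ : Tendsto (fun t : ℝ => t * a / (1 + t * b)) (𝓝[<] 0) (𝓝[<] 0) := by
    rw [tendsto_nhdsWithin_iff]
    refine ⟨hφcont.mono_left nhdsWithin_le_nhds, ?_⟩
    filter_upwards [hmem] with t ht
    exact div_neg_of_neg_of_pos (mul_neg_of_neg_of_pos ht.2 ha) (hb_pos t ht)
  have hQ : Tendsto (fun t : ℝ =>
      (‖x + (t * a / (1 + t * b)) • y‖ ^ 2 - ‖x‖ ^ 2) / (2 * (t * a / (1 + t * b))))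
      (𝓝[<] 0) (𝓝 (rhoMinus x y)) := (tendsto_rhoMinus x y).comp hφ
  have hfac : Tendsto (fun t : ℝ => (1 + t * b) * a) (𝓝[<] 0) (𝓝 a) := by
    have : ContinuousAt (fun t : ℝ => (1 + t * b) * a) 0 := by fun_prop
    have h := this.tendsto.mono_left (nhdsWithin_le_nhds (s := Iio (0:ℝ)))
    simpa using h
  have hfac2 : Tendsto (fun t : ℝ => (b + t * b ^ 2 / 2) * ‖x‖ ^ 2) (𝓝[<] 0)
      (𝓝 (b * ‖x‖ ^ 2)) := by
    have : ContinuousAt (fun t : ℝ => (b + t * b ^ 2 / 2) * ‖x‖ ^ 2) 0 := by fun_prop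
    have h := this.tendsto.mono_left (nhdsWithin_le_nhds (s := Iio (0:ℝ)))
    simpa using h
  have htot : Tendsto (fun t : ℝ =>
      (1 + t * b) * a *
        ((‖x + (t * a / (1 + t * b)) • y‖ ^ 2 - ‖x‖ ^ 2) / (2 * (t * a / (1 + t * b)))) +
        (b + t * b ^ 2 / 2) * ‖x‖ ^ 2) (𝓝[<] 0)
      (𝓝 (a * rhoMinus x y + b * ‖x‖ ^ 2)) := (hfac.mul hQ).add hfac2
  apply htot.congr'
  filter_upwards [hmem] with t ht
  have h1 := hb_pos t ht
  rw [vec_transform x y h1.ne', norm_smul, Real.norm_eq_abs, abs_of_pos h1, mul_pow]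
  exact (scalar_transform ht.2.ne h1.ne' ha.ne').symm

end RhoTransform

section PartA
variable {X : Type*} {Y : Type*} [NormedAddCommGroup X] [NormedSpace ℝ X]
  [NormedAddCommGroup Y] [NormedSpace ℝ Y]

private lemma star_bound (T : X →ₗ[ℝ] Y)
    (hpres : ∀ x y : X, rhoStar x y = 0 → rhoStar (T x) (T y) = 0)
    {u : X} (hu : ‖u‖ = 1) (y : X) :
    ‖T u‖ * |rhoPlus u y| ≤ ‖T y‖ := by
  have hz : rhoStar u ((1:ℝ) • y + (-rhoPlus u y) • u) = 0 := by
    unfold rhoStar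
    rw [rhoPlus_smul_add u y one_pos (-rhoPlus u y), hu]
    ring
  have h2 := hpres _ _ hz
  rw [map_add, map_smul, map_smul] at h2
  unfold rhoStar at h2
  rw [rhoPlus_smul_add (T u) (T y) one_pos (-rhoPlus u y),
    rhoMinus_smul_add (T u) (T y) one_pos (-rhoPlus u y), one_mul, one_mul] at h2
  rcases eq_or_lt_of_le (norm_nonneg (T u)) with h0 | h0
  · rw [← h0]
    simpa using norm_nonneg (T y)
  · rcases mul_eq_zero.1 h2 with h | h
    · have habs : |rhoMinus (T u) (T y)| ≤ ‖T u‖ * ‖T y‖ := abs_rhoMinus_le _ _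
      have he : rhoMinus (T u) (T y) = rhoPlus u y * ‖T u‖ ^ 2 := by linarith
      rw [he, abs_mul, abs_of_nonneg (by positivity : (0:ℝ) ≤ ‖T u‖ ^ 2)] at habs
      nlinarith [abs_nonneg (rhoPlus u y)]
    · have habs : |rhoPlus (T u) (T y)| ≤ ‖T u‖ * ‖T y‖ := abs_rhoPlus_le _ _
      have he : rhoPlus (T u) (T y) = rhoPlus u y * ‖T u‖ ^ 2 := by linarith
      rw [he, abs_mul, abs_of_nonneg (by positivity : (0:ℝ) ≤ ‖T u‖ ^ 2)] at habs
      nlinarith [abs_nonneg (rhoPlus u y)]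

private lemma caseA (T : X →ₗ[ℝ] Y)
    (hpres : ∀ x y : X, rhoStar x y = 0 → rhoStar (T x) (T y) = 0)
    {u v : X} (hu : ‖u‖ = 1) (hv : ‖v‖ = 1)
    (h1 : -(1/4 : ℝ) ≤ rhoPlus u v) (h2 : -(1/2 : ℝ) ≤ rhoPlus v u) :
    ‖T u‖ ≤ 24 * ‖T v‖ := by
  set m : X := (2:ℝ) • v + (1:ℝ) • u with hm
  have hrvm : rhoPlus v m = rhoPlus v u + 2 := by
    rw [show m = (1:ℝ) • u + (2:ℝ) • v by rw [hm]; abel]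
    rw [rhoPlus_smul_add v u one_pos 2, hv]
    ring
  have habs_vm : |rhoPlus v m| ≤ ‖v‖ * ‖m‖ := abs_rhoPlus_le v m
  have hs_low : (3/2 : ℝ) ≤ ‖m‖ := by
    rw [hv, one_mul] at habs_vm
    have := le_abs_self (rhoPlus v m)
    linarith [(abs_le.1 habs_vm).2, this, hrvm ▸ this]
  have hs_hi : ‖m‖ ≤ 3 := by
    calc ‖m‖ ≤ ‖(2:ℝ) • v‖ + ‖(1:ℝ) • u‖ := norm_add_le _ _
      _ = 3 := by rw [norm_smul, norm_smul, hu, hv]; norm_num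
  have hspos : (0:ℝ) < ‖m‖ := lt_of_lt_of_le (by norm_num) hs_low
  -- leg 1
  have hrum : rhoPlus u m = 2 * rhoPlus u v + 1 := by
    rw [hm, rhoPlus_smul_add u v two_pos 1, hu]
    ring
  have hrum_ge : (1/2 : ℝ) ≤ rhoPlus u m := by rw [hrum]; linarith
  have hleg1 := star_bound T hpres hu m
  have hTu_le : ‖T u‖ ≤ 2 * ‖T m‖ := by
    have h' : ‖T u‖ * (1/2) ≤ ‖T u‖ * |rhoPlus u m| :=
      mul_le_mul_of_nonneg_left (le_trans hrum_ge (le_abs_self _)) (norm_nonneg _)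
    linarith
  -- leg 2
  set w : X := ‖m‖⁻¹ • m with hwdef
  have hw : ‖w‖ = 1 := by
    rw [hwdef, norm_smul, Real.norm_eq_abs, abs_of_pos (inv_pos.2 hspos),
      inv_mul_cancel₀ hspos.ne']
  have hvw : v = (1/2 : ℝ) • (-u) + (‖m‖/2) • w := by
    rw [hwdef, smul_smul]
    have hc : ‖m‖/2 * ‖m‖⁻¹ = 1/2 := by field_simp
    rw [hc, hm]
    module
  have hrwv : (1/4 : ℝ) ≤ rhoPlus w v := by
    have hcalc : rhoPlus w v = (1/2) * rhoPlus w (-u) + (‖m‖/2) * ‖w‖ ^ 2 := by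
      nth_rewrite 1 [hvw]
      exact rhoPlus_smul_add w (-u) (by norm_num) (‖m‖/2)
    have hneg : rhoPlus w (-u) = -rhoMinus w u := rhoPlus_neg_right w u
    have habs : |rhoMinus w u| ≤ ‖w‖ * ‖u‖ := abs_rhoMinus_le w u
    rw [hw, hu, one_mul] at habs
    rw [hcalc, hneg, hw]
    have := (abs_le.1 habs).2
    nlinarith
  have hleg2 := star_bound T hpres hw v
  have hTw_le : ‖T w‖ ≤ 4 * ‖T v‖ := by
    have h' : ‖T w‖ * (1/4) ≤ ‖T w‖ * |rhoPlus w v| :=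
      mul_le_mul_of_nonneg_left (le_trans hrwv (le_abs_self _)) (norm_nonneg _)
    linarith
  have hTm : ‖T m‖ = ‖m‖ * ‖T w‖ := by
    rw [hwdef, map_smul, norm_smul, Real.norm_eq_abs, abs_of_pos (inv_pos.2 hspos)]
    field_simp
  nlinarith [norm_nonneg (T w), norm_nonneg (T v)]

private lemma norm_bound (T : X →ₗ[ℝ] Y)
    (hpres : ∀ x y : X, rhoStar x y = 0 → rhoStar (T x) (T y) = 0)
    {u v : X} (hu : ‖u‖ = 1) (hv : ‖v‖ = 1) :
    ‖T u‖ ≤ 24 * ‖T v‖ := by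
  by_cases hc : (1/4 : ℝ) ≤ |rhoPlus u v|
  · have hleg := star_bound T hpres hu v
    have h' : ‖T u‖ * (1/4) ≤ ‖T u‖ * |rhoPlus u v| :=
      mul_le_mul_of_nonneg_left hc (norm_nonneg _)
    nlinarith [norm_nonneg (T v)]
  · push_neg at hc
    have hc' := abs_lt.1 hc
    by_cases hc2 : -(1/2 : ℝ) ≤ rhoPlus v u
    · exact caseA T hpres hu hv (le_of_lt hc'.1) hc2
    · push_neg at hc2
      have hv' : ‖-v‖ = 1 := by rw [norm_neg, hv]
      have h1' : -(1/4 : ℝ) ≤ rhoPlus u (-v) := by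
        rw [rhoPlus_neg_right]
        have := rhoMinus_le_rhoPlus u v
        linarith [hc'.2]
      have h2' : -(1/2 : ℝ) ≤ rhoPlus (-v) u := by
        rw [rhoPlus_neg_left]
        have := rhoMinus_le_rhoPlus v u
        linarith
      have := caseA T hpres hu hv' h1' h2'
      rwa [map_neg, norm_neg] at this

lemma T_bounds (T : X →ₗ[ℝ] Y) (hT : T ≠ 0)
    (hpres : ∀ x y : X, rhoStar x y = 0 → rhoStar (T x) (T y) = 0) :
    ∃ c : ℝ, 0 < c ∧ ∀ x : X, c / 24 * ‖x‖ ≤ ‖T x‖ ∧ ‖T x‖ ≤ 24 * c * ‖x‖ := by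
  obtain ⟨x₀, hx₀⟩ : ∃ x, T x ≠ 0 := by
    by_contra h
    push_neg at h
    exact hT (LinearMap.ext fun x => by simpa using h x)
  have hx₀0 : x₀ ≠ 0 := fun h => hx₀ (by rw [h, map_zero])
  set u₀ : X := ‖x₀‖⁻¹ • x₀ with hu₀def
  have hu₀ : ‖u₀‖ = 1 := by
    rw [hu₀def, norm_smul, Real.norm_eq_abs, abs_of_pos (inv_pos.2 (norm_pos_iff.2 hx₀0)),
      inv_mul_cancel₀ (norm_pos_iff.2 hx₀0).ne']
  have hc0 : 0 < ‖T u₀‖ := by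
    have h1 : (0:ℝ) < ‖x₀‖ := norm_pos_iff.2 hx₀0
    have h2 : (0:ℝ) < ‖T x₀‖ := norm_pos_iff.2 hx₀
    rw [hu₀def, map_smul, norm_smul, Real.norm_eq_abs, abs_of_pos (inv_pos.2 h1)]
    exact mul_pos (inv_pos.2 h1) h2
  refine ⟨‖T u₀‖, hc0, fun x => ?_⟩
  by_cases hx : x = 0
  · simp [hx]
  · have hxpos : (0:ℝ) < ‖x‖ := norm_pos_iff.2 hx
    set ux : X := ‖x‖⁻¹ • x with huxdef
    have hux : ‖ux‖ = 1 := by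
      rw [huxdef, norm_smul, Real.norm_eq_abs, abs_of_pos (inv_pos.2 hxpos),
        inv_mul_cancel₀ hxpos.ne']
    have hTx : ‖T x‖ = ‖x‖ * ‖T ux‖ := by
      rw [huxdef, map_smul, norm_smul, Real.norm_eq_abs, abs_of_pos (inv_pos.2 hxpos)]
      field_simp
    have hb1 : ‖T ux‖ ≤ 24 * ‖T u₀‖ := norm_bound T hpres hux hu₀
    have hb2 : ‖T u₀‖ ≤ 24 * ‖T ux‖ := norm_bound T hpres hu₀ hux
    constructor
    · rw [hTx]
      rw [div_mul_eq_mul_div, div_le_iff₀ (by norm_num : (0:ℝ) < 24)]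
      calc ‖T u₀‖ * ‖x‖ ≤ (24 * ‖T ux‖) * ‖x‖ := by nlinarith
        _ = ‖x‖ * ‖T ux‖ * 24 := by ring
    · rw [hTx]
      nlinarith
end PartA

section Mean
variable {G : Type*} [NormedAddCommGroup G]

open BoundedContinuousFunction

private noncomputable def avgS (f : G →ᵇ ℝ) (n : ℕ) (u : Fin (n+1) → G) : ℝ :=
  ⨆ z : G, (∑ i, f (z + u i)) / (n + 1 : ℝ)

private lemma avg_le (f : G →ᵇ ℝ) (n : ℕ) (u : Fin (n+1) → G) (z : G) :
    (∑ i, f (z + u i)) / (n + 1 : ℝ) ≤ ‖f‖ := by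
  rw [div_le_iff₀ (by positivity : (0:ℝ) < (n:ℝ) + 1)]
  calc (∑ i, f (z + u i)) ≤ ∑ _i : Fin (n+1), ‖f‖ :=
        Finset.sum_le_sum fun i _ => le_trans (le_abs_self _) (f.norm_coe_le_norm _)
    _ = ‖f‖ * ((n:ℝ) + 1) := by
        rw [Finset.sum_const, Finset.card_univ, Fintype.card_fin, nsmul_eq_mul]
        push_cast; ring

private lemma avg_ge (f : G →ᵇ ℝ) (n : ℕ) (u : Fin (n+1) → G) (z : G) :
    -‖f‖ ≤ (∑ i, f (z + u i)) / (n + 1 : ℝ) := by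
  rw [le_div_iff₀ (by positivity : (0:ℝ) < (n:ℝ) + 1)]
  calc -‖f‖ * ((n:ℝ) + 1) = ∑ _i : Fin (n+1), -‖f‖ := by
        rw [Finset.sum_const, Finset.card_univ, Fintype.card_fin, nsmul_eq_mul]
        push_cast; ring
    _ ≤ ∑ i, f (z + u i) := Finset.sum_le_sum fun i _ => by
        have := f.norm_coe_le_norm (z + u i)
        rw [Real.norm_eq_abs] at this
        linarith [(abs_le.1 this).1]

private lemma bddAbove_avg (f : G →ᵇ ℝ) (n : ℕ) (u : Fin (n+1) → G) :
    BddAbove (Set.range fun z : G => (∑ i, f (z + u i)) / (n + 1 : ℝ)) := by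
  refine ⟨‖f‖, ?_⟩
  rintro _ ⟨z, rfl⟩
  exact avg_le f n u z

private lemma avgS_le_norm (f : G →ᵇ ℝ) (n : ℕ) (u : Fin (n+1) → G) : avgS f n u ≤ ‖f‖ :=
  ciSup_le (avg_le f n u)

private lemma le_avgS_of (f : G →ᵇ ℝ) (n : ℕ) (u : Fin (n+1) → G) (z : G) :
    (∑ i, f (z + u i)) / (n + 1 : ℝ) ≤ avgS f n u :=
  le_ciSup (bddAbove_avg f n u) z

private lemma neg_norm_le_avgS (f : G →ᵇ ℝ) (n : ℕ) (u : Fin (n+1) → G) :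
    -‖f‖ ≤ avgS f n u :=
  le_trans (avg_ge f n u 0) (le_avgS_of f n u 0)

private noncomputable def meanP (f : G →ᵇ ℝ) : ℝ :=
  ⨅ p : Σ n : ℕ, (Fin (n+1) → G), avgS f p.1 p.2

private lemma meanP_le (f : G →ᵇ ℝ) (n : ℕ) (u : Fin (n+1) → G) : meanP f ≤ avgS f n u := by
  have hb : BddBelow (Set.range fun p : Σ n : ℕ, (Fin (n+1) → G) => avgS f p.1 p.2) := by
    refine ⟨-‖f‖, ?_⟩
    rintro _ ⟨p, rfl⟩
    exact neg_norm_le_avgS f p.1 p.2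
  exact ciInf_le hb ⟨n, u⟩

private lemma meanP_nonpos {f : G →ᵇ ℝ} (h : ∀ z, f z ≤ 0) : meanP f ≤ 0 := by
  refine le_trans (meanP_le f 0 (fun _ => 0)) (ciSup_le fun z => ?_)
  simpa using h (z + 0)

private lemma meanP_const (c : ℝ) : meanP (BoundedContinuousFunction.const G c) = c := by
  have h : ∀ (n : ℕ) (u : Fin (n+1) → G), avgS (BoundedContinuousFunction.const G c) n u = c := by
    intro n u
    have : ∀ z : G, (∑ i : Fin (n+1), (BoundedContinuousFunction.const G c) (z + u i))
        / (n + 1 : ℝ) = c := by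
      intro z
      rw [show (∑ i : Fin (n+1), (BoundedContinuousFunction.const G c) (z + u i))
          = ((n:ℝ)+1) * c by
        simp only [BoundedContinuousFunction.const_apply]
        rw [Finset.sum_const, Finset.card_univ, Fintype.card_fin, nsmul_eq_mul]
        push_cast; ring]
      rw [mul_comm, mul_div_assoc, div_self (by positivity : ((n:ℝ)+1) ≠ 0), mul_one]
    unfold avgS
    rw [funext this]
    exact ciSup_const
  unfold meanP
  rw [show (fun p : Σ n : ℕ, (Fin (n+1) → G) =>
    avgS (BoundedContinuousFunction.const G c) p.1 p.2) = fun _ => c from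
    funext fun p => h p.1 p.2]
  exact ciInf_const

private lemma meanP_add_le (f g : G →ᵇ ℝ) : meanP (f + g) ≤ meanP f + meanP g := by
  have hmain : ∀ ε : ℝ, 0 < ε → meanP (f + g) ≤ meanP f + meanP g + ε := by
    intro ε hε
    obtain ⟨⟨n, u⟩, hn⟩ : ∃ p : Σ n : ℕ, (Fin (n+1) → G), avgS f p.1 p.2 < meanP f + ε/2 :=
      exists_lt_of_ciInf_lt (lt_add_of_pos_right (meanP f) (by linarith : (0:ℝ) < ε/2))
    obtain ⟨⟨m, v⟩, hm⟩ : ∃ p : Σ n : ℕ, (Fin (n+1) → G), avgS g p.1 p.2 < meanP g + ε/2 :=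
      exists_lt_of_ciInf_lt (lt_add_of_pos_right (meanP g) (by linarith : (0:ℝ) < ε/2))
    set e : Fin (n*m+n+m+1) ≃ Fin (n+1) × Fin (m+1) :=
      (finCongr (by ring)).trans finProdFinEquiv.symm with he
    have key : avgS (f + g) (n*m+n+m) (fun k => u (e k).1 + v (e k).2) ≤ avgS f n u + avgS g m v := by
      apply ciSup_le
      intro z
      set A := avgS f n u with hA
      set B := avgS g m v with hB
      set nn : ℝ := (n : ℝ) + 1 with hnn
      set mm : ℝ := (m : ℝ) + 1 with hmm
      have hnnpos : 0 < nn := by rw [hnn]; positivity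
      have hmmpos : 0 < mm := by rw [hmm]; positivity
      have hre : ∀ h : G →ᵇ ℝ, (∑ k : Fin (n*m+n+m+1), h (z + (u (e k).1 + v (e k).2)))
          = ∑ i : Fin (n+1), ∑ j : Fin (m+1), h (z + (u i + v j)) := by
        intro h
        rw [show (∑ k : Fin (n*m+n+m+1), h (z + (u (e k).1 + v (e k).2)))
            = ∑ p : Fin (n+1) × Fin (m+1), h (z + (u p.1 + v p.2)) from
          Equiv.sum_comp e (fun p => h (z + (u p.1 + v p.2)))]
        rw [Fintype.sum_prod_type]
      have hfbound : (∑ i : Fin (n+1), ∑ j : Fin (m+1), f (z + (u i + v j)))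
          ≤ mm * (nn * A) := by
        rw [Finset.sum_comm]
        have hinner : ∀ j : Fin (m+1),
            (∑ i : Fin (n+1), f (z + (u i + v j))) ≤ nn * A := by
          intro j
          have h1 := le_avgS_of f n u (z + v j)
          rw [div_le_iff₀ (by positivity : (0:ℝ) < (n:ℝ) + 1)] at h1
          calc (∑ i : Fin (n+1), f (z + (u i + v j)))
              = ∑ i : Fin (n+1), f ((z + v j) + u i) :=
                Finset.sum_congr rfl fun i _ => by rw [show z + (u i + v j) = z + v j + u i by abel]
            _ ≤ A * ((n:ℝ) + 1) := h1
            _ = nn * A := by rw [hnn]; ring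
        calc (∑ j : Fin (m+1), ∑ i : Fin (n+1), f (z + (u i + v j)))
            ≤ ∑ _j : Fin (m+1), nn * A := Finset.sum_le_sum fun j _ => hinner j
          _ = mm * (nn * A) := by
              rw [Finset.sum_const, Finset.card_univ, Fintype.card_fin, nsmul_eq_mul, hmm]
              push_cast; ring
      have hgbound : (∑ i : Fin (n+1), ∑ j : Fin (m+1), g (z + (u i + v j)))
          ≤ nn * (mm * B) := by
        have hinner : ∀ i : Fin (n+1),
            (∑ j : Fin (m+1), g (z + (u i + v j))) ≤ mm * B := by
          intro i
          have h1 := le_avgS_of g m v (z + u i)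
          rw [div_le_iff₀ (by positivity : (0:ℝ) < (m:ℝ) + 1)] at h1
          calc (∑ j : Fin (m+1), g (z + (u i + v j)))
              = ∑ j : Fin (m+1), g ((z + u i) + v j) :=
                Finset.sum_congr rfl fun j _ => by rw [show z + (u i + v j) = z + u i + v j by abel]
            _ ≤ B * ((m:ℝ) + 1) := h1
            _ = mm * B := by rw [hmm]; ring
        calc (∑ i : Fin (n+1), ∑ j : Fin (m+1), g (z + (u i + v j)))
            ≤ ∑ _i : Fin (n+1), mm * B := Finset.sum_le_sum fun i _ => hinner i
          _ = nn * (mm * B) := by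
              rw [Finset.sum_const, Finset.card_univ, Fintype.card_fin, nsmul_eq_mul, hnn]
              push_cast; ring
      have hsplit : (∑ k : Fin (n*m+n+m+1), (f + g) (z + (u (e k).1 + v (e k).2)))
          = (∑ k : Fin (n*m+n+m+1), f (z + (u (e k).1 + v (e k).2)))
            + ∑ k : Fin (n*m+n+m+1), g (z + (u (e k).1 + v (e k).2)) := by
        simp only [BoundedContinuousFunction.coe_add, Pi.add_apply]
        exact Finset.sum_add_distrib
      rw [hsplit, hre f, hre g]
      have hcard : ((n*m+n+m : ℕ) : ℝ) + 1 = nn * mm := by rw [hnn, hmm]; push_cast; ring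
      rw [hcard, div_le_iff₀ (by positivity)]
      calc (∑ i : Fin (n+1), ∑ j : Fin (m+1), f (z + (u i + v j)))
            + ∑ i : Fin (n+1), ∑ j : Fin (m+1), g (z + (u i + v j))
          ≤ mm * (nn * A) + nn * (mm * B) := add_le_add hfbound hgbound
        _ = (A + B) * (nn * mm) := by ring
    calc meanP (f + g) ≤ avgS (f + g) (n*m+n+m) (fun k => u (e k).1 + v (e k).2) := meanP_le _ _ _
      _ ≤ avgS f n u + avgS g m v := key
      _ ≤ meanP f + ε/2 + (meanP g + ε/2) := add_le_add hn.le hm.le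
      _ = meanP f + meanP g + ε := by ring
  by_contra hcon
  push_neg at hcon
  have := hmain ((meanP (f+g) - (meanP f + meanP g))/2) (by linarith)
  linarith

private lemma meanP_smul {c : ℝ} (hc : 0 < c) (f : G →ᵇ ℝ) :
    meanP (c • f) = c * meanP f := by
  have havg : ∀ (n : ℕ) (u : Fin (n+1) → G), avgS (c • f) n u = c * avgS f n u := by
    intro n u
    unfold avgS
    rw [Real.mul_iSup_of_nonneg hc.le]
    congr 1
    funext z
    rw [show (∑ i, (c • f) (z + u i)) = c * ∑ i, f (z + u i) by
      simp only [BoundedContinuousFunction.coe_smul, Pi.smul_apply, smul_eq_mul]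
      rw [Finset.mul_sum]]
    ring
  unfold meanP
  rw [Real.mul_iInf_of_nonneg hc.le]
  congr 1
  funext p
  exact havg p.1 p.2

/-- translate a bounded continuous function -/
private noncomputable def bshift (a : G) (f : G →ᵇ ℝ) : G →ᵇ ℝ :=
  f.compContinuous ⟨fun x => x + a, by continuity⟩

private lemma bshift_apply (a : G) (f : G →ᵇ ℝ) (x : G) : bshift a f x = f (x + a) := rfl

private lemma meanP_shift_nonpos (a : G) (f : G →ᵇ ℝ) : meanP (f - bshift a f) ≤ 0 := by
  have hmain : ∀ n : ℕ, meanP (f - bshift a f) ≤ 2 * ‖f‖ / ((n:ℝ) + 1) := by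
    intro n
    refine le_trans (meanP_le _ n (fun i => (i : ℕ) • a)) (ciSup_le fun z => ?_)
    have hterm : ∀ i : Fin (n+1), (f - bshift a f) (z + (i : ℕ) • a)
        = f (z + (i : ℕ) • a) - f (z + ((i : ℕ) + 1) • a) := by
      intro i
      simp only [BoundedContinuousFunction.coe_sub, Pi.sub_apply, bshift_apply]
      congr 2
      rw [succ_nsmul]
      abel
    rw [Finset.sum_congr rfl (fun i _ => hterm i)]
    rw [Fin.sum_univ_eq_sum_range (fun i => f (z + i • a) - f (z + (i + 1) • a))]
    rw [Finset.sum_range_sub' (fun i => f (z + i • a))]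
    have h0 : f (z + 0 • a) ≤ ‖f‖ := le_trans (le_abs_self _) (f.norm_coe_le_norm _)
    have h1 : -‖f‖ ≤ f (z + (n+1) • a) := by
      have := f.norm_coe_le_norm (z + (n+1) • a)
      rw [Real.norm_eq_abs] at this
      linarith [(abs_le.1 this).1]
    rw [div_le_div_iff₀ (by positivity) (by positivity : (0:ℝ) < (n:ℝ)+1)]
    nlinarith [h0, h1]
  by_contra hcon
  push_neg at hcon
  obtain ⟨n, hn⟩ := exists_nat_gt (2 * ‖f‖ / meanP (f - bshift a f))
  have hnpos : (0:ℝ) < (n:ℝ) + 1 := by positivity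
  have hm := hmain n
  have h2 : 2 * ‖f‖ / ((n:ℝ)+1) < meanP (f - bshift a f) := by
    rw [div_lt_iff₀ hnpos]
    have h3 : 2 * ‖f‖ / meanP (f - bshift a f) < (n:ℝ) + 1 := lt_trans hn (by linarith)
    rw [div_lt_iff₀ hcon] at h3
    nlinarith
  linarith

private lemma bshift_neg (a : G) (f : G →ᵇ ℝ) : bshift a (-f) = -(bshift a f) := by
  ext x
  simp [bshift_apply]

lemma exists_invMean (G : Type*) [NormedAddCommGroup G] :
    ∃ M : (G →ᵇ ℝ) →ₗ[ℝ] ℝ,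
      (∀ c : ℝ, M (BoundedContinuousFunction.const G c) = c) ∧
      (∀ f g : G →ᵇ ℝ, (∀ z, f z ≤ g z) → M f ≤ M g) ∧
      (∀ (a : G) (f : G →ᵇ ℝ), M (bshift a f) = M f) := by
  have h1 : (1 : G →ᵇ ℝ) ≠ 0 := by
    intro h
    have h2 : (1 : G →ᵇ ℝ) (0 : G) = (0 : G →ᵇ ℝ) (0 : G) := by rw [h]
    simp at h2
  have hdom : ∀ x : (LinearPMap.mkSpanSingleton (K := ℝ) (σ := RingHom.id ℝ) (1 : G →ᵇ ℝ) (1:ℝ) h1).domain,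
      (LinearPMap.mkSpanSingleton (K := ℝ) (σ := RingHom.id ℝ) (1 : G →ᵇ ℝ) (1:ℝ) h1) x ≤ meanP (x : G →ᵇ ℝ) := by
    rintro ⟨x, hx⟩
    obtain ⟨c, rfl⟩ := Submodule.mem_span_singleton.1 hx
    have hval : (LinearPMap.mkSpanSingleton (K := ℝ) (σ := RingHom.id ℝ) (1 : G →ᵇ ℝ) (1:ℝ) h1)
        ⟨c • (1 : G →ᵇ ℝ), hx⟩ = c • (1:ℝ) := LinearPMap.mkSpanSingleton'_apply _ _ _ c _
    rw [hval]
    have hc1 : c • (1 : G →ᵇ ℝ) = BoundedContinuousFunction.const G c := by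
      ext x; simp
    show c • (1:ℝ) ≤ meanP (c • (1 : G →ᵇ ℝ))
    rw [hc1, meanP_const, smul_eq_mul, mul_one]
  obtain ⟨M, hM1, hMle⟩ := exists_extension_of_le_sublinear
    (LinearPMap.mkSpanSingleton (K := ℝ) (σ := RingHom.id ℝ) (1 : G →ᵇ ℝ) (1:ℝ) h1) meanP
    (fun c hc x => meanP_smul hc x) meanP_add_le hdom
  · have hMone : M 1 = 1 := by
      have := hM1 ⟨(1 : G →ᵇ ℝ),
        Submodule.mem_span_singleton_self (1 : G →ᵇ ℝ)⟩
      rw [this, LinearPMap.mkSpanSingleton_apply]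
    have hconst : ∀ c : ℝ, M (BoundedContinuousFunction.const G c) = c := by
      intro c
      have hc1 : BoundedContinuousFunction.const G c = c • (1 : G →ᵇ ℝ) := by
        ext x; simp
      rw [hc1, map_smul, hMone, smul_eq_mul, mul_one]
    have hmono : ∀ f g : G →ᵇ ℝ, (∀ z, f z ≤ g z) → M f ≤ M g := by
      intro f g hfg
      have h2 : M (f - g) ≤ meanP (f - g) := hMle _
      have h3 : meanP (f - g) ≤ 0 := meanP_nonpos (fun z => by
        simp only [BoundedContinuousFunction.coe_sub, Pi.sub_apply]
        linarith [hfg z])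
      rw [map_sub] at h2
      linarith
    refine ⟨M, hconst, hmono, fun a f => ?_⟩
    have ha' : M f - M (bshift a f) ≤ 0 := by
      have h5 := le_trans (hMle (f - bshift a f)) (meanP_shift_nonpos a f)
      rwa [map_sub] at h5
    have hb2 : M (bshift a f) - M f ≤ 0 := by
      have h4 : bshift a f - f = (-f) - bshift a (-f) := by rw [bshift_neg]; abel
      have h5 : M (bshift a f - f) ≤ meanP ((-f) - bshift a (-f)) := by
        rw [← h4]; exact hMle _
      have h6 := le_trans h5 (meanP_shift_nonpos a (-f))
      rwa [map_sub] at h6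
    linarith

end Mean

section Quad

open BoundedContinuousFunction

lemma exists_quadratic {Y : Type*} [NormedAddCommGroup Y] [NormedSpace ℝ Y]
    {δ : ℝ} (hδ0 : 0 ≤ δ) (hδ1 : δ < 1)
    (hpar : ∀ z w : Y,
      2 * (1 - δ) * ‖z‖ ^ 2 ≤ ‖z + w‖ ^ 2 + ‖z - w‖ ^ 2 - 2 * ‖w‖ ^ 2 ∧
      ‖z + w‖ ^ 2 + ‖z - w‖ ^ 2 - 2 * ‖w‖ ^ 2 ≤ 2 * (1 + δ) * ‖z‖ ^ 2) :
    ∃ Q : Y → ℝ, (∀ y z : Y, Q (y + z) + Q (y - z) = 2 * Q y + 2 * Q z) ∧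
      (∀ y : Y, 2 * (1 - δ) * ‖y‖ ^ 2 ≤ Q y) ∧
      (∀ y : Y, Q y ≤ 2 * (1 + δ) * ‖y‖ ^ 2) := by
  obtain ⟨M, hMconst, hMmono, hMshift⟩ := exists_invMean Y
  have hparc : ∀ y x : Y,
      2 * (1 - δ) * ‖y‖ ^ 2 ≤ ‖x + y‖ ^ 2 + ‖x - y‖ ^ 2 - 2 * ‖x‖ ^ 2 ∧
      ‖x + y‖ ^ 2 + ‖x - y‖ ^ 2 - 2 * ‖x‖ ^ 2 ≤ 2 * (1 + δ) * ‖y‖ ^ 2 := by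
    intro y x
    have h := hpar y x
    rw [show y + x = x + y from add_comm y x, show ‖y - x‖ = ‖x - y‖ from norm_sub_rev y x] at h
    exact h
  have hbound : ∀ y x : Y, ‖(‖x + y‖ ^ 2 + ‖x - y‖ ^ 2 - 2 * ‖x‖ ^ 2 : ℝ)‖
      ≤ 2 * (1 + δ) * ‖y‖ ^ 2 := by
    intro y x
    have h := hparc y x
    rw [Real.norm_eq_abs, abs_le]
    constructor
    · nlinarith [h.1, norm_nonneg y, sq_nonneg ‖y‖]
    · exact h.2
  have hcont : ∀ y : Y, Continuous (fun x : Y => ‖x + y‖ ^ 2 + ‖x - y‖ ^ 2 - 2 * ‖x‖ ^ 2) := by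
    intro y
    fun_prop
  set Gf : Y → (Y →ᵇ ℝ) := fun y =>
    ofNormedAddCommGroup (fun x => ‖x + y‖ ^ 2 + ‖x - y‖ ^ 2 - 2 * ‖x‖ ^ 2)
      (hcont y) (2 * (1 + δ) * ‖y‖ ^ 2) (hbound y) with hGf
  have hGfapp : ∀ y x : Y, Gf y x = ‖x + y‖ ^ 2 + ‖x - y‖ ^ 2 - 2 * ‖x‖ ^ 2 := fun y x => rfl
  refine ⟨fun y => M (Gf y), ?_, ?_, ?_⟩
  · intro y z
    have hident : Gf (y + z) + Gf (y - z)
        = Gf y + Gf y + bshift y (Gf z) + bshift (-y) (Gf z) := by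
      ext x
      simp only [BoundedContinuousFunction.coe_add, Pi.add_apply, bshift_apply, hGfapp]
      rw [show x + (y + z) = (x + y) + z by abel, show x - (y + z) = (x + -y) - z by abel,
        show x + (y - z) = (x + y) - z by abel, show x - (y - z) = (x + -y) + z by abel,
        show x + -y = x - y by abel]
      ring
    have h1 : M (Gf (y + z)) + M (Gf (y - z)) = M (Gf (y + z) + Gf (y - z)) := (map_add M _ _).symm
    rw [h1, hident, map_add, map_add, map_add, hMshift, hMshift]
    ring
  · intro y
    have h := hMmono (BoundedContinuousFunction.const Y (2 * (1 - δ) * ‖y‖ ^ 2)) (Gf y)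
      (fun z => by rw [hGfapp]; simpa using (hparc y z).1)
    rwa [hMconst] at h
  · intro y
    have h := hMmono (Gf y) (BoundedContinuousFunction.const Y (2 * (1 + δ) * ‖y‖ ^ 2))
      (fun z => by rw [hGfapp]; simpa using (hparc y z).2)
    rwa [hMconst] at h

set_option maxHeartbeats 1000000 in
private lemma addhom_smul {X : Type*} [NormedAddCommGroup X] [NormedSpace ℝ X]
    (φ : X →+ ℝ) {C : ℝ} (hb : ∀ x : X, ‖x‖ ≤ 1 → |φ x| ≤ C)
    (a : ℝ) (x : X) : φ (a • x) = a * φ x := by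
  have hC : 0 ≤ C := le_trans (abs_nonneg _) (hb 0 (by simp))
  have hφcontAt : ContinuousAt φ 0 := by
    rw [Metric.continuousAt_iff]
    intro ε hε
    obtain ⟨n, hn⟩ := exists_nat_gt (C / ε)
    have hn1pos : (0:ℝ) < (n:ℝ) + 1 := by positivity
    refine ⟨1 / ((n:ℝ) + 1), by positivity, ?_⟩
    intro z hz
    have hznorm : ‖z‖ < 1 / ((n:ℝ) + 1) := by
      simpa [dist_zero_right] using hz
    have hnrm : ‖(n + 1 : ℕ) • z‖ = ((n:ℝ) + 1) * ‖z‖ := by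
      rw [← Nat.cast_smul_eq_nsmul ℝ, norm_smul, Real.norm_natCast]
      push_cast
      ring
    have hsmall : ‖(n + 1 : ℕ) • z‖ ≤ 1 := by
      rw [hnrm]
      have h7 : ((n:ℝ) + 1) * ‖z‖ < ((n:ℝ) + 1) * (1 / ((n:ℝ) + 1)) :=
        mul_lt_mul_of_pos_left hznorm hn1pos
      rw [mul_one_div, div_self hn1pos.ne'] at h7
      exact h7.le
    have hbig : |φ ((n + 1 : ℕ) • z)| ≤ C := hb _ hsmall
    have hmul : φ ((n + 1 : ℕ) • z) = ((n:ℝ) + 1) * φ z := by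
      rw [map_nsmul, nsmul_eq_mul]
      push_cast
      ring
    have habs : |φ z| = |φ ((n + 1 : ℕ) • z)| / ((n:ℝ) + 1) := by
      rw [hmul, abs_mul, abs_of_pos hn1pos]
      field_simp
    have hkey : C < ε * ((n:ℝ) + 1) := by
      rw [div_lt_iff₀ hε] at hn
      nlinarith
    rw [map_zero, dist_zero_right, Real.norm_eq_abs, habs, div_lt_iff₀ hn1pos]
    exact lt_of_le_of_lt hbig hkey
  have hφcont : Continuous φ :=
    (uniformContinuous_of_continuousAt_zero φ hφcontAt).continuous
  have h1 := (AddMonoidHom.toRealLinearMap φ hφcont).map_smul a x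
  have hc := AddMonoidHom.coe_toRealLinearMap φ hφcont
  rw [show ⇑(AddMonoidHom.toRealLinearMap φ hφcont) = ⇑φ from hc] at h1
  rw [h1, smul_eq_mul]

lemma inner_of_quadratic {X : Type*} [NormedAddCommGroup X] [NormedSpace ℝ X]
    {Q : X → ℝ} {α β : ℝ} (hα : 0 < α) (hβ : 0 < β)
    (hq : ∀ x z : X, Q (x + z) + Q (x - z) = 2 * Q x + 2 * Q z)
    (hl : ∀ x : X, α * ‖x‖ ^ 2 ≤ Q x) (hu : ∀ x : X, Q x ≤ β * ‖x‖ ^ 2) :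
    ∃ inner : X → X → ℝ,
      (∀ x y : X, inner x y = inner y x) ∧
      (∀ (a : ℝ) (x y z : X), inner (a • x + y) z = a * inner x z + inner y z) ∧
      (∀ x : X, 0 ≤ inner x x) ∧
      (∀ x : X, inner x x = 0 → x = 0) ∧
      ∃ k : ℝ, 1 ≤ k ∧ ∀ x : X,
        (1 / k) * ‖x‖ ≤ Real.sqrt (inner x x) ∧ Real.sqrt (inner x x) ≤ k * ‖x‖ := by
  have hQ0 : Q 0 = 0 := by
    have h := hq 0 0
    simp only [add_zero, sub_zero] at h
    linarith
  have heven : ∀ z : X, Q (-z) = Q z := by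
    intro z
    have h := hq 0 z
    rw [zero_add, zero_sub, hQ0] at h
    linarith
  have key : ∀ u v y : X, (Q ((u + v) + y) - Q ((u + v) - y)) / 4
      + (Q ((u - v) + y) - Q ((u - v) - y)) / 4
      = 2 * ((Q (u + y) - Q (u - y)) / 4) := by
    intro u v y
    have h1 := hq (u + y) v
    have h2 := hq (u - y) v
    rw [show (u + y) + v = (u + v) + y by abel, show (u + y) - v = (u - v) + y by abel] at h1
    rw [show (u - y) + v = (u + v) - y by abel, show (u - y) - v = (u - v) - y by abel] at h2
    linarith
  have hadd : ∀ p q y : X, (Q (p + y) - Q (p - y)) / 4 + (Q (q + y) - Q (q - y)) / 4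
      = (Q ((p + q) + y) - Q ((p + q) - y)) / 4 := by
    intro p q y
    have k1 := key ((1/2 : ℝ) • (p + q)) ((1/2 : ℝ) • (p - q)) y
    have k2 := key ((1/2 : ℝ) • (p + q)) ((1/2 : ℝ) • (p + q)) y
    have e1 : (1/2 : ℝ) • (p + q) + (1/2 : ℝ) • (p - q) = p := by module
    have e2 : (1/2 : ℝ) • (p + q) - (1/2 : ℝ) • (p - q) = q := by module
    have e3 : (1/2 : ℝ) • (p + q) + (1/2 : ℝ) • (p + q) = p + q := by module
    have e4 : (1/2 : ℝ) • (p + q) - (1/2 : ℝ) • (p + q) = (0 : X) := by module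
    rw [e1, e2] at k1
    rw [e3, e4] at k2
    have hB0 : (Q (0 + y) - Q (0 - y)) / 4 = 0 := by
      rw [zero_add, zero_sub, heven]; ring
    rw [hB0] at k2
    linarith
  have hboundB : ∀ x y : X, |(Q (x + y) - Q (x - y)) / 4| ≤ β * (‖x‖ + ‖y‖) ^ 2 / 2 := by
    intro x y
    have hsq1 : ‖x + y‖ ^ 2 ≤ (‖x‖ + ‖y‖) ^ 2 := by
      nlinarith [norm_add_le x y, norm_nonneg (x + y), norm_nonneg x, norm_nonneg y]
    have hsq2 : ‖x - y‖ ^ 2 ≤ (‖x‖ + ‖y‖) ^ 2 := by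
      nlinarith [norm_sub_le x y, norm_nonneg (x - y), norm_nonneg x, norm_nonneg y]
    have h1 : Q (x + y) ≤ β * (‖x‖ + ‖y‖) ^ 2 :=
      le_trans (hu (x + y)) (mul_le_mul_of_nonneg_left hsq1 hβ.le)
    have h2 : Q (x - y) ≤ β * (‖x‖ + ‖y‖) ^ 2 :=
      le_trans (hu (x - y)) (mul_le_mul_of_nonneg_left hsq2 hβ.le)
    have h3 : 0 ≤ Q (x + y) := le_trans (by positivity) (hl (x + y))
    have h4 : 0 ≤ Q (x - y) := le_trans (by positivity) (hl (x - y))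
    rw [abs_le]
    constructor <;> nlinarith
  -- homogeneity via continuity of the additive map
  have hhom : ∀ (y : X) (a : ℝ) (x : X),
      (Q (a • x + y) - Q (a • x - y)) / 4 = a * ((Q (x + y) - Q (x - y)) / 4) := by
    intro y a x
    have hsm := addhom_smul (AddMonoidHom.mk' (fun x : X => (Q (x + y) - Q (x - y)) / 4)
      (fun p q => (hadd p q y).symm)) (C := β * (1 + ‖y‖) ^ 2 / 2) ?hb a x
    case hb =>
      intro z hz
      refine le_trans (hboundB z y) ?_
      have h8 : (‖z‖ + ‖y‖) ^ 2 ≤ (1 + ‖y‖) ^ 2 := by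
        nlinarith [norm_nonneg z, norm_nonneg y]
      nlinarith
    simpa using hsm
  -- assemble
  refine ⟨fun x y => (Q (x + y) - Q (x - y)) / 4, ?_, ?_, ?_, ?_, ?_⟩
  · intro x y
    show (Q (x + y) - Q (x - y)) / 4 = (Q (y + x) - Q (y - x)) / 4
    rw [show x + y = y + x from add_comm x y, show x - y = -(y - x) by abel, heven]
  · intro a x y z
    show (Q ((a • x + y) + z) - Q ((a • x + y) - z)) / 4
      = a * ((Q (x + z) - Q (x - z)) / 4) + (Q (y + z) - Q (y - z)) / 4
    rw [← hadd (a • x) y z, hhom z a x]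
  · intro x
    show (0:ℝ) ≤ (Q (x + x) - Q (x - x)) / 4
    have h1 : α * ‖x + x‖ ^ 2 ≤ Q (x + x) := hl (x + x)
    have h2 : Q (x - x) = 0 := by rw [sub_self, hQ0]
    rw [h2]
    nlinarith [norm_nonneg (x + x), sq_nonneg ‖x + x‖]
  · intro x hx
    replace hx : (Q (x + x) - Q (x - x)) / 4 = 0 := hx
    have h2 : Q (x - x) = 0 := by rw [sub_self, hQ0]
    rw [h2, sub_zero] at hx
    have h3 : Q (x + x) = 0 := by linarith [hx]
    have h1 : α * ‖x + x‖ ^ 2 ≤ 0 := h3 ▸ hl (x + x)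
    have h6 : α * ‖x + x‖ ^ 2 = 0 :=
      le_antisymm h1 (mul_nonneg hα.le (sq_nonneg _))
    have h7 : ‖x + x‖ ^ 2 = 0 := by
      rcases mul_eq_zero.1 h6 with h | h
      · exact absurd h hα.ne'
      · exact h
    have h4 : ‖x + x‖ = 0 := by
      have := sq_eq_zero_iff.1 h7
      exact this
    have h5 : x + x = 0 := norm_eq_zero.1 h4
    have h8 : (2:ℝ) • x = 0 := by rw [two_smul]; exact h5
    rcases smul_eq_zero.1 h8 with h | h
    · norm_num at h
    · exact h
  · set k : ℝ := max 1 (max (Real.sqrt β) (Real.sqrt α)⁻¹) with hk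
    have hkpos : (0:ℝ) < k := lt_of_lt_of_le one_pos (le_max_left _ _)
    have hαs : (0:ℝ) < Real.sqrt α := Real.sqrt_pos.2 hα
    refine ⟨k, le_max_left _ _, fun x => ?_⟩
    have hnx : ‖x + x‖ = 2 * ‖x‖ := by
      rw [← two_smul ℝ x, norm_smul, Real.norm_ofNat]
    have h2 : Q (x - x) = 0 := by rw [sub_self, hQ0]
    have hxx1 : α * ‖x‖ ^ 2 ≤ (Q (x + x) - Q (x - x)) / 4 := by
      have h1 := hl (x + x)
      rw [hnx] at h1
      rw [h2]
      nlinarith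
    have hxx2 : (Q (x + x) - Q (x - x)) / 4 ≤ β * ‖x‖ ^ 2 := by
      have h1 := hu (x + x)
      rw [hnx] at h1
      rw [h2]
      nlinarith
    constructor
    · show 1 / k * ‖x‖ ≤ Real.sqrt ((Q (x + x) - Q (x - x)) / 4)
      have hsa : Real.sqrt α * ‖x‖ ≤ Real.sqrt ((Q (x + x) - Q (x - x)) / 4) := by
        rw [show Real.sqrt α * ‖x‖ = Real.sqrt (α * ‖x‖ ^ 2) by
          rw [Real.sqrt_mul hα.le, Real.sqrt_sq (norm_nonneg x)]]
        exact Real.sqrt_le_sqrt hxx1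
      have hk1 : 1 / k ≤ Real.sqrt α := by
        rw [div_le_iff₀ hkpos]
        have hk0 : (Real.sqrt α)⁻¹ ≤ k := le_trans (le_max_right _ _) (le_max_right 1 _)
        have h6 := mul_le_mul_of_nonneg_left hk0 hαs.le
        rwa [mul_inv_cancel₀ hαs.ne'] at h6
      calc 1 / k * ‖x‖ ≤ Real.sqrt α * ‖x‖ := mul_le_mul_of_nonneg_right hk1 (norm_nonneg x)
        _ ≤ _ := hsa
    · show Real.sqrt ((Q (x + x) - Q (x - x)) / 4) ≤ k * ‖x‖
      have hsb : Real.sqrt ((Q (x + x) - Q (x - x)) / 4) ≤ Real.sqrt β * ‖x‖ := by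
        rw [show Real.sqrt β * ‖x‖ = Real.sqrt (β * ‖x‖ ^ 2) by
          rw [Real.sqrt_mul hβ.le, Real.sqrt_sq (norm_nonneg x)]]
        exact Real.sqrt_le_sqrt hxx2
      have hk2 : Real.sqrt β ≤ k := le_trans (le_max_left _ _) (le_max_right 1 _)
      calc Real.sqrt ((Q (x + x) - Q (x - x)) / 4) ≤ Real.sqrt β * ‖x‖ := hsb
        _ ≤ k * ‖x‖ := mul_le_mul_of_nonneg_right hk2 (norm_nonneg x)

end Quad

theorem equiv_inner_of_parallelogram_target {X Y : Type*} [NormedAddCommGroup X]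
    [NormedSpace ℝ X] [NormedAddCommGroup Y] [NormedSpace ℝ Y]
    (hdim : 2 ≤ Module.rank ℝ X) (δ : ℝ) (hδ0 : 0 ≤ δ) (hδ1 : δ < 1)
    (hpar : ∀ z w : Y,
      2 * (1 - δ) * ‖z‖ ^ 2 ≤ ‖z + w‖ ^ 2 + ‖z - w‖ ^ 2 - 2 * ‖w‖ ^ 2 ∧
      ‖z + w‖ ^ 2 + ‖z - w‖ ^ 2 - 2 * ‖w‖ ^ 2 ≤ 2 * (1 + δ) * ‖z‖ ^ 2)
    (T : X →ₗ[ℝ] Y) (hT : T ≠ 0)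
    (hpres : ∀ x y : X, rhoStar x y = 0 → rhoStar (T x) (T y) = 0) :
    ∃ inner : X → X → ℝ,
      (∀ x y : X, inner x y = inner y x) ∧
      (∀ (a : ℝ) (x y z : X), inner (a • x + y) z = a * inner x z + inner y z) ∧
      (∀ x : X, 0 ≤ inner x x) ∧
      (∀ x : X, inner x x = 0 → x = 0) ∧
      ∃ k : ℝ, 1 ≤ k ∧ ∀ x : X,
        (1 / k) * ‖x‖ ≤ Real.sqrt (inner x x) ∧ Real.sqrt (inner x x) ≤ k * ‖x‖ := by
  obtain ⟨c, hc, hbounds⟩ := T_bounds T hT hpres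
  obtain ⟨Q, hQeq, hQl, hQu⟩ := exists_quadratic hδ0 hδ1 hpar
  have h1δ : (0:ℝ) < 1 - δ := by linarith
  have h2δ : (0:ℝ) < 1 + δ := by linarith
  have hαpos : (0:ℝ) < 2 * (1 - δ) * (c / 24) ^ 2 :=
    mul_pos (mul_pos two_pos h1δ) (pow_pos (by positivity) 2)
  have hβpos : (0:ℝ) < 2 * (1 + δ) * (24 * c) ^ 2 :=
    mul_pos (mul_pos two_pos h2δ) (pow_pos (by positivity) 2)
  refine inner_of_quadratic (Q := fun x => Q (T x)) hαpos hβpos ?_ ?_ ?_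
  · intro x z
    show Q (T (x + z)) + Q (T (x - z)) = 2 * Q (T x) + 2 * Q (T z)
    rw [map_add, map_sub]
    exact hQeq (T x) (T z)
  · intro x
    show 2 * (1 - δ) * (c / 24) ^ 2 * ‖x‖ ^ 2 ≤ Q (T x)
    have hm := (hbounds x).1
    have ha : (0:ℝ) ≤ c / 24 * ‖x‖ := by positivity
    have hsq : (c / 24 * ‖x‖) ^ 2 ≤ ‖T x‖ ^ 2 := by nlinarith
    have hql := hQl (T x)
    nlinarith [mul_le_mul_of_nonneg_left hsq (le_of_lt (mul_pos two_pos h1δ))]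
  · intro x
    show Q (T x) ≤ 2 * (1 + δ) * (24 * c) ^ 2 * ‖x‖ ^ 2
    have hM := (hbounds x).2
    have ha : (0:ℝ) ≤ ‖T x‖ := norm_nonneg _
    have hsq : ‖T x‖ ^ 2 ≤ (24 * c * ‖x‖) ^ 2 := by nlinarith
    have hqu := hQu (T x)
    nlinarith [mul_le_mul_of_nonneg_left hsq (le_of_lt (mul_pos two_pos h2δ))]
end
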